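/- arXiv:0812.2306 — 5 statements merged into one kernel-verified Lean document; each statement's English description precedes it below -/
import Mathlib

section
/- The fermionic power series on the semi-infinite interval [0,∞) satisfy the fermionic recursion: for every m ∈ ℕ^l, I_{C,m}(q,z) = ∑_{0 ≤ a ≤ m} z^a q^{W_C(a)} (∏_{i=1}^l (q)_{m_i − a_i})^{−1} I_{C,a}(q,z), where 0 ≤ a ≤ m means 0 ≤ a_i ≤ m_i for all i. Moreover the solution of this recursion is unique: any family (Ĩ_m)_{m∈ℕ^l} of formal power series in ℚ(q)[[z_1,…,z_l]] with Ĩ_0 = 1 satisfying the same recursion equals (I_{C,m}(q,z))_{m∈ℕ^l}. -/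
/- STATEMENT 0: The fermionic power series I_{C,m}(q,z) on the semi-infinite
   interval [0,∞) (formal power series in z_1,…,z_l over ℚ(q)) satisfy the
   fermionic recursion
     I_{C,m} = ∑_{0≤a≤m} z^a q^{W_C(a)} (∏_i (q)_{m_i−a_i})⁻¹ I_{C,a},
   and any family (Ĩ_m) with Ĩ_0 = 1 satisfying the same recursion equals
   (I_{C,m}). -/

noncomputable section

open scoped BigOperators

/-- The field ℚ(q). -/
abbrev Kq : Type := RatFunc ℚ

/-- the variable q -/
def q0 : Kq := RatFunc.X

/-- `(q)_n = ∏_{k=1}^n (1 − q^k)` -/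
def qp0 (n : ℕ) : Kq := ∏ k ∈ Finset.range n, (1 - q0 ^ (k + 1))

/-- The number `m_i = ∑_t m_{i,t}` of particles of colour `i` in a
configuration `c = (m_{i,t})`. -/
def rowSum {l : ℕ} (c : (Fin l × ℕ) →₀ ℕ) (i : Fin l) : ℕ :=
  ∑ p ∈ c.support, if p.1 = i then c p else 0

/-- The total weight `∑_t t·m_{i,t}` of the particles of colour `i`. -/
def degSum {l : ℕ} (c : (Fin l × ℕ) →₀ ℕ) (i : Fin l) : ℕ :=
  ∑ p ∈ c.support, if p.1 = i then p.2 * c p else 0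

/-- `Q_C(𝐦) = (1/2)(∑ C_{i,i'} min(t,t') m_{i,t} m_{i',t'} − ∑ C_{i,i} t m_{i,t})`;
the expression in parentheses is even, so integer division by 2 is exact. -/
def Qc {l : ℕ} (C : Matrix (Fin l) (Fin l) ℤ) (c : (Fin l × ℕ) →₀ ℕ) : ℤ :=
  ((∑ p ∈ c.support, ∑ p' ∈ c.support,
      C p.1 p'.1 * (min p.2 p'.2 : ℤ) * c p * c p')
    - ∑ p ∈ c.support, C p.1 p.1 * (p.2 : ℤ) * c p) / 2

/-- `W_C(a) = (1/2)(∑ C_{ij} a_i a_j − ∑ C_{ii} a_i)`; the expression in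
parentheses is even, so integer division by 2 is exact. -/
def Wc {l : ℕ} (C : Matrix (Fin l) (Fin l) ℤ) (a : Fin l → ℕ) : ℤ :=
  ((∑ i, ∑ j, C i j * a i * a j) - ∑ i, C i i * a i) / 2

/-- The fermionic power series `I_{C,m}(q,z) ∈ ℚ(q)[[z_1,…,z_l]]`: the
coefficient of the monomial `z^k` is the (finite) sum over all configurations
`c = (m_{i,t})` with row sums `m` and colour-degrees `k` of
`q^{Q_C(c)} / ∏_{i,t} (q)_{m_{i,t}}`. -/
def Iser {l : ℕ} (C : Matrix (Fin l) (Fin l) ℤ) (m : Fin l → ℕ) :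
    MvPowerSeries (Fin l) Kq :=
  fun k => ∑ᶠ (c : (Fin l × ℕ) →₀ ℕ)
    (_ : (∀ i, rowSum c i = m i) ∧ (∀ i, degSum c i = k i)),
      q0 ^ Qc C c * (∏ p ∈ c.support, qp0 (c p))⁻¹

namespace FermiAux

open Finsupp Finset

variable {l : ℕ}

lemma q0_ne : (q0 : Kq) ≠ 0 := RatFunc.X_ne_zero

lemma one_sub_q0_pow_ne (k : ℕ) : (1 : Kq) - q0 ^ (k + 1) ≠ 0 := by
  intro h
  have h1 : (q0 : Kq) ^ (k + 1) = 1 := (sub_eq_zero.mp h).symm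
  have h2 : algebraMap (Polynomial ℚ) Kq (Polynomial.X ^ (k + 1)) =
      algebraMap (Polynomial ℚ) Kq 1 := by
    rw [map_pow, map_one, RatFunc.algebraMap_X]; exact h1
  have h3 : (Polynomial.X : Polynomial ℚ) ^ (k + 1) = 1 :=
    IsFractionRing.injective (Polynomial ℚ) Kq h2
  have := congrArg Polynomial.natDegree h3
  simp [Polynomial.natDegree_X_pow] at this

lemma qp0_ne (n : ℕ) : qp0 n ≠ 0 :=
  Finset.prod_ne_zero_iff.mpr fun k _ => one_sub_q0_pow_ne k

lemma qp0_zero : qp0 0 = 1 := by simp [qp0]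

/-- the summand -/
def fwt (C : Matrix (Fin l) (Fin l) ℤ) (c : (Fin l × ℕ) →₀ ℕ) : Kq :=
  q0 ^ Qc C c * (∏ p ∈ c.support, qp0 (c p))⁻¹

lemma fwt_ne (C : Matrix (Fin l) (Fin l) ℤ) (c : (Fin l × ℕ) →₀ ℕ) : fwt C c ≠ 0 :=
  mul_ne_zero (zpow_ne_zero _ q0_ne)
    (inv_ne_zero (Finset.prod_ne_zero_iff.mpr fun p _ => qp0_ne _))

def e1 (l : ℕ) : (Fin l × ℕ) ↪ (Fin l × ℕ) :=
  ⟨fun p => (p.1, p.2 + 1), fun p q h => by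
    simp only [Prod.mk.injEq] at h
    exact Prod.ext h.1 (by omega)⟩

def e0 (l : ℕ) : Fin l ↪ (Fin l × ℕ) :=
  ⟨fun i => (i, 0), fun i j h => by simpa using congrArg Prod.fst h⟩

def up (c : (Fin l × ℕ) →₀ ℕ) : (Fin l × ℕ) →₀ ℕ := embDomain (e1 l) c

def bs (b : Fin l → ℕ) : (Fin l × ℕ) →₀ ℕ :=
  embDomain (e0 l) (equivFunOnFinite.symm b)

def dn (c : (Fin l × ℕ) →₀ ℕ) : (Fin l × ℕ) →₀ ℕ :=
  comapDomain (fun p => (p.1, p.2 + 1)) c ((e1 l).injective.injOn)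

lemma up_apply (c : (Fin l × ℕ) →₀ ℕ) (i : Fin l) (t : ℕ) :
    up c (i, t + 1) = c (i, t) := embDomain_apply_self _ _ (i, t)

lemma up_apply0 (c : (Fin l × ℕ) →₀ ℕ) (i : Fin l) : up c (i, 0) = 0 := by
  apply embDomain_notin_range
  rintro ⟨⟨j, t⟩, h⟩
  simp [e1, Prod.ext_iff] at h

lemma bs_apply0 (b : Fin l → ℕ) (i : Fin l) : bs b (i, 0) = b i :=
  embDomain_apply_self (e0 l) _ i

lemma bs_apply1 (b : Fin l → ℕ) (i : Fin l) (t : ℕ) : bs b (i, t + 1) = 0 := by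
  apply embDomain_notin_range
  rintro ⟨j, h⟩
  simp [e0, Prod.ext_iff] at h

lemma dn_apply (c : (Fin l × ℕ) →₀ ℕ) (i : Fin l) (t : ℕ) :
    dn c (i, t) = c (i, t + 1) := rfl

lemma dn_up_bs (c' : (Fin l × ℕ) →₀ ℕ) (b : Fin l → ℕ) :
    dn (up c' + bs b) = c' := by
  ext ⟨i, t⟩
  rw [dn_apply, Finsupp.add_apply, up_apply, bs_apply1, add_zero]

lemma decomp (c : (Fin l × ℕ) →₀ ℕ) :
    up (dn c) + bs (fun i => c (i, 0)) = c := by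
  ext ⟨i, t⟩
  cases t with
  | zero => rw [Finsupp.add_apply, up_apply0, bs_apply0, zero_add]
  | succ t => rw [Finsupp.add_apply, up_apply, dn_apply, bs_apply1, add_zero]

lemma mem_up_support {c' : (Fin l × ℕ) →₀ ℕ} {p : Fin l × ℕ}
    (h : p ∈ (up c').support) : p.2 ≠ 0 := by
  rw [up, support_embDomain, Finset.mem_map] at h
  obtain ⟨a, _, rfl⟩ := h
  simp [e1]

lemma mem_bs_support {b : Fin l → ℕ} {p : Fin l × ℕ}
    (h : p ∈ (bs b).support) : p.2 = 0 := by
  rw [bs, support_embDomain, Finset.mem_map] at h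
  obtain ⟨a, _, rfl⟩ := h
  rfl

lemma disj (c' : (Fin l × ℕ) →₀ ℕ) (b : Fin l → ℕ) :
    Disjoint (up c').support (bs b).support := by
  rw [Finset.disjoint_left]
  intro p hp hq
  exact mem_up_support hp (mem_bs_support hq)

section helpers

lemma sum_support_add {M : Type*} [AddCommMonoid M] (x y : (Fin l × ℕ) →₀ ℕ)
    (h : Disjoint x.support y.support) (g : (Fin l × ℕ) → ℕ → M)
    (hg : ∀ p, g p 0 = 0) :
    ∑ p ∈ (x + y).support, g p ((x + y) p)
      = (∑ p ∈ x.support, g p (x p)) + ∑ p ∈ y.support, g p (y p) := by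
  classical
  rw [Finsupp.support_add_eq h, Finset.sum_union h]
  congr 1
  · apply Finset.sum_congr rfl
    intro p hp
    have : y p = 0 := notMem_support_iff.mp (Finset.disjoint_left.mp h hp)
    rw [Finsupp.add_apply, this, add_zero]
  · apply Finset.sum_congr rfl
    intro p hp
    have : x p = 0 := notMem_support_iff.mp (Finset.disjoint_right.mp h hp)
    rw [Finsupp.add_apply, this, zero_add]

lemma prod_support_add {M : Type*} [CommMonoid M] (x y : (Fin l × ℕ) →₀ ℕ)
    (h : Disjoint x.support y.support) (g : (Fin l × ℕ) → ℕ → M)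
    (hg : ∀ p, g p 0 = 1) :
    ∏ p ∈ (x + y).support, g p ((x + y) p)
      = (∏ p ∈ x.support, g p (x p)) * ∏ p ∈ y.support, g p (y p) := by
  classical
  rw [Finsupp.support_add_eq h, Finset.prod_union h]
  congr 1
  · apply Finset.prod_congr rfl
    intro p hp
    have : y p = 0 := notMem_support_iff.mp (Finset.disjoint_left.mp h hp)
    rw [Finsupp.add_apply, this, add_zero]
  · apply Finset.prod_congr rfl
    intro p hp
    have : x p = 0 := notMem_support_iff.mp (Finset.disjoint_right.mp h hp)
    rw [Finsupp.add_apply, this, zero_add]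

lemma sum_support_emb {α : Type*} {M : Type*} [AddCommMonoid M]
    (e : α ↪ (Fin l × ℕ)) (v : α →₀ ℕ) (g : (Fin l × ℕ) → ℕ → M) :
    ∑ p ∈ (embDomain e v).support, g p ((embDomain e v) p)
      = ∑ a ∈ v.support, g (e a) (v a) := by
  rw [support_embDomain, Finset.sum_map]
  exact Finset.sum_congr rfl fun a _ => by rw [embDomain_apply_self]

lemma prod_support_emb {α : Type*} {M : Type*} [CommMonoid M]
    (e : α ↪ (Fin l × ℕ)) (v : α →₀ ℕ) (g : (Fin l × ℕ) → ℕ → M) :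
    ∏ p ∈ (embDomain e v).support, g p ((embDomain e v) p)
      = ∏ a ∈ v.support, g (e a) (v a) := by
  rw [support_embDomain, Finset.prod_map]
  exact Finset.prod_congr rfl fun a _ => by rw [embDomain_apply_self]

end helpers

lemma rowSum_up (c' : (Fin l × ℕ) →₀ ℕ) (i : Fin l) :
    rowSum (up c') i = rowSum c' i := by
  unfold rowSum up
  rw [sum_support_emb (e1 l) c' (fun p n => if p.1 = i then n else 0)]
  rfl

lemma rowSum_bs (b : Fin l → ℕ) (i : Fin l) : rowSum (bs b) i = b i := by
  unfold rowSum bs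
  rw [sum_support_emb (e0 l) _ (fun p n => if p.1 = i then n else 0)]
  have : ∀ a, (e0 l a).1 = a := fun a => rfl
  simp only [this]
  rw [Finset.sum_ite_eq' _ i (fun a => equivFunOnFinite.symm b a)]
  split_ifs with h
  · simp
  · have h0 : equivFunOnFinite.symm b i = 0 := notMem_support_iff.mp h
    have : b i = 0 := by simpa using h0
    simp [this]

lemma degSum_up (c' : (Fin l × ℕ) →₀ ℕ) (i : Fin l) :
    degSum (up c') i = degSum c' i + rowSum c' i := by
  unfold degSum up rowSum
  rw [sum_support_emb (e1 l) c' (fun p n => if p.1 = i then p.2 * n else 0)]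
  rw [← Finset.sum_add_distrib]
  apply Finset.sum_congr rfl
  intro p _
  show (if p.1 = i then (p.2 + 1) * c' p else 0) = _
  split_ifs <;> ring

lemma degSum_bs (b : Fin l → ℕ) (i : Fin l) : degSum (bs b) i = 0 := by
  unfold degSum bs
  rw [sum_support_emb (e0 l) _ (fun p n => if p.1 = i then p.2 * n else 0)]
  simp [e0]
  intro _ _ _
  exact Or.inl rfl

lemma rowSum_split (c' : (Fin l × ℕ) →₀ ℕ) (b : Fin l → ℕ) (i : Fin l) :
    rowSum (up c' + bs b) i = rowSum c' i + b i := by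
  have h : rowSum (up c' + bs b) i = rowSum (up c') i + rowSum (bs b) i :=
    sum_support_add _ _ (disj c' b) (fun p n => if p.1 = i then n else 0)
      (fun _ => by simp)
  rw [h, rowSum_up, rowSum_bs]

lemma degSum_split (c' : (Fin l × ℕ) →₀ ℕ) (b : Fin l → ℕ) (i : Fin l) :
    degSum (up c' + bs b) i = degSum c' i + rowSum c' i := by
  have h : degSum (up c' + bs b) i = degSum (up c') i + degSum (bs b) i :=
    sum_support_add _ _ (disj c' b) (fun p n => if p.1 = i then p.2 * n else 0)
      (fun _ => by simp)
  rw [h, degSum_up, degSum_bs, add_zero]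

lemma rowSum_dn (c : (Fin l × ℕ) →₀ ℕ) (i : Fin l) :
    rowSum c i = rowSum (dn c) i + c (i, 0) := by
  conv_lhs => rw [← decomp c]
  rw [rowSum_split]

lemma degSum_dn (c : (Fin l × ℕ) →₀ ℕ) (i : Fin l) :
    degSum c i = degSum (dn c) i + rowSum (dn c) i := by
  conv_lhs => rw [← decomp c]
  rw [degSum_split]

end FermiAux

namespace FermiAux

open Finsupp Finset

variable {l : ℕ}

lemma colorSum (c : (Fin l × ℕ) →₀ ℕ) (h : Fin l → ℤ) :
    ∑ p ∈ c.support, h p.1 * (c p : ℤ) = ∑ i, h i * (rowSum c i : ℤ) := by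
  have hrs : ∀ i : Fin l, (rowSum c i : ℤ)
      = ∑ p ∈ c.support, if p.1 = i then (c p : ℤ) else 0 := by
    intro i
    unfold rowSum
    push_cast
    rfl
  simp_rw [hrs, Finset.mul_sum]
  rw [Finset.sum_comm]
  apply Finset.sum_congr rfl
  intro p _
  have hh : ∀ i : Fin l, (h i * if p.1 = i then (c p : ℤ) else 0)
      = if p.1 = i then h i * (c p : ℤ) else 0 := by
    intro i; split_ifs <;> simp
  simp_rw [hh]
  rw [Finset.sum_ite_eq]
  simp

/-- numerator of `Wc` -/
def numW (C : Matrix (Fin l) (Fin l) ℤ) (a : Fin l → ℕ) : ℤ :=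
  (∑ i, ∑ j, C i j * a i * a j) - ∑ i, C i i * a i

lemma even_numW (C : Matrix (Fin l) (Fin l) ℤ) (hsym : C.IsSymm) (a : Fin l → ℕ) :
    Even (numW C a) := by
  have h2 : ((numW C a : ℤ) : ZMod 2) = 0 := by
    unfold numW
    push_cast
    have hadd : ∀ z : ZMod 2, z + z = 0 := by decide
    have hmul : ∀ z : ZMod 2, z * z = z := by decide
    rw [sub_eq_zero, ← Finset.sum_product'
      (f := fun i j => ((C i j : ℤ) : ZMod 2) * (a i : ZMod 2) * (a j : ZMod 2))]
    rw [← Finset.diag_union_offDiag (Finset.univ : Finset (Fin l)),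
      Finset.sum_union (Finset.disjoint_diag_offDiag _), Finset.sum_diag]
    have hoff : ∑ p ∈ (Finset.univ : Finset (Fin l)).offDiag,
        ((C p.1 p.2 : ℤ) : ZMod 2) * (a p.1 : ZMod 2) * (a p.2 : ZMod 2) = 0 := by
      apply Finset.sum_involution (fun p _ => (p.2, p.1))
      · intro p _
        simp only
        rw [hsym.apply p.2 p.1]
        have h' : ((C p.2 p.1 : ℤ) : ZMod 2) * (a p.2 : ZMod 2) * (a p.1 : ZMod 2)
            = ((C p.2 p.1 : ℤ) : ZMod 2) * (a p.1 : ZMod 2) * (a p.2 : ZMod 2) := by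
          ring
        rw [h', hadd]
      · intro p hp _
        rw [Finset.mem_offDiag] at hp
        intro hc
        exact hp.2.2 (congrArg Prod.snd hc)
      · intro p hp
        rw [Finset.mem_offDiag] at hp ⊢
        exact ⟨Finset.mem_univ _, Finset.mem_univ _, fun hc => hp.2.2 hc.symm⟩
      · intro p _; rfl
    rw [hoff, add_zero]
    apply Finset.sum_congr rfl
    intro i _
    rw [mul_assoc, hmul]
  obtain ⟨t, ht⟩ := (ZMod.intCast_zmod_eq_zero_iff_dvd _ 2).mp h2
  exact ⟨t, by omega⟩

/-- numerator of `Qc` -/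
def numQ (C : Matrix (Fin l) (Fin l) ℤ) (c : (Fin l × ℕ) →₀ ℕ) : ℤ :=
  (∑ p ∈ c.support, ∑ p' ∈ c.support,
      C p.1 p'.1 * (min p.2 p'.2 : ℤ) * c p * c p')
    - ∑ p ∈ c.support, C p.1 p.1 * (p.2 : ℤ) * c p

lemma Qc_eq (C : Matrix (Fin l) (Fin l) ℤ) (c : (Fin l × ℕ) →₀ ℕ) :
    Qc C c = numQ C c / 2 := rfl

lemma Wc_eq (C : Matrix (Fin l) (Fin l) ℤ) (a : Fin l → ℕ) :
    Wc C a = numW C a / 2 := rfl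

lemma numQ_split (C : Matrix (Fin l) (Fin l) ℤ) (c' : (Fin l × ℕ) →₀ ℕ)
    (b : Fin l → ℕ) :
    numQ C (up c' + bs b) = numQ C c' + numW C (rowSum c') := by
  set x := up c' with hxdef
  set y := bs b with hydef
  have hDS : ∑ p ∈ (x + y).support, ∑ p' ∈ (x + y).support,
      C p.1 p'.1 * (min p.2 p'.2 : ℤ) * (x + y) p * (x + y) p'
      = ∑ p ∈ c'.support, ∑ p' ∈ c'.support,
        C p.1 p'.1 * ((min p.2 p'.2 : ℤ) + 1) * c' p * c' p' := by
    rw [sum_support_add x y (disj c' b)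
      (fun p n => ∑ p' ∈ (x + y).support,
        C p.1 p'.1 * (min p.2 p'.2 : ℤ) * n * (x + y) p')
      (fun p => by simp)]
    beta_reduce
    have hy0 : ∀ p ∈ y.support, (∑ p' ∈ (x + y).support,
        C p.1 p'.1 * (min p.2 p'.2 : ℤ) * (y p) * (x + y) p') = 0 := by
      intro p hp
      apply Finset.sum_eq_zero
      intro p' _
      rw [mem_bs_support hp]
      simp
    rw [Finset.sum_congr rfl hy0, Finset.sum_const_zero, add_zero]
    have hinner : ∀ p ∈ x.support, (∑ p' ∈ (x + y).support,
        C p.1 p'.1 * (min p.2 p'.2 : ℤ) * (x p) * (x + y) p')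
        = ∑ p' ∈ x.support, C p.1 p'.1 * (min p.2 p'.2 : ℤ) * x p * x p' := by
      intro p _
      rw [sum_support_add x y (disj c' b)
        (fun p' n => C p.1 p'.1 * (min p.2 p'.2 : ℤ) * (x p) * n)
        (fun p' => by simp)]
      beta_reduce
      have hz : ∀ p' ∈ y.support,
          C p.1 p'.1 * (min p.2 p'.2 : ℤ) * (x p) * (y p') = 0 := by
        intro p' hp'
        rw [mem_bs_support hp']
        simp
      rw [Finset.sum_congr rfl hz, Finset.sum_const_zero, add_zero]
    rw [Finset.sum_congr rfl hinner]
    rw [hxdef]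
    unfold up
    rw [sum_support_emb (e1 l) c'
      (fun p n => ∑ p' ∈ (embDomain (e1 l) c').support,
        C p.1 p'.1 * (min p.2 p'.2 : ℤ) * n * (embDomain (e1 l) c') p')]
    beta_reduce
    apply Finset.sum_congr rfl
    intro p _
    rw [sum_support_emb (e1 l) c'
      (fun p' n => C ((e1 l) p).1 p'.1 * (min ((e1 l) p).2 p'.2 : ℤ) * (c' p) * n)]
    beta_reduce
    apply Finset.sum_congr rfl
    intro p' _
    show C p.1 p'.1 * (min (((p.2 : ℕ) + 1 : ℕ) : ℤ) (((p'.2 : ℕ) + 1 : ℕ) : ℤ))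
        * (c' p : ℤ) * (c' p' : ℤ) = _
    have hmin : min (((p.2 : ℕ) + 1 : ℕ) : ℤ) (((p'.2 : ℕ) + 1 : ℕ) : ℤ)
        = min (p.2 : ℤ) (p'.2 : ℤ) + 1 := by
      push_cast
      omega
    rw [hmin]
  have hSS : ∑ p ∈ (x + y).support, C p.1 p.1 * (p.2 : ℤ) * (x + y) p
      = ∑ p ∈ c'.support, C p.1 p.1 * ((p.2 : ℤ) + 1) * c' p := by
    rw [sum_support_add x y (disj c' b)
      (fun p n => C p.1 p.1 * (p.2 : ℤ) * n) (fun p => by simp)]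
    beta_reduce
    have hz : ∀ p ∈ y.support, C p.1 p.1 * (p.2 : ℤ) * y p = 0 := by
      intro p hp
      rw [mem_bs_support hp]
      simp
    rw [Finset.sum_congr rfl hz, Finset.sum_const_zero, add_zero, hxdef]
    unfold up
    rw [sum_support_emb (e1 l) c' (fun p n => C p.1 p.1 * (p.2 : ℤ) * n)]
    beta_reduce
    apply Finset.sum_congr rfl
    intro p _
    show C p.1 p.1 * (((p.2 + 1 : ℕ)) : ℤ) * (c' p) = _
    push_cast
    ring
  have hcross : ∑ p ∈ c'.support, ∑ p' ∈ c'.support,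
      C p.1 p'.1 * (c' p : ℤ) * (c' p' : ℤ)
      = ∑ i, ∑ j, C i j * (rowSum c' i : ℤ) * (rowSum c' j : ℤ) := by
    have h1 : ∀ p ∈ c'.support, (∑ p' ∈ c'.support,
        C p.1 p'.1 * (c' p : ℤ) * (c' p' : ℤ))
        = ∑ j, C p.1 j * (c' p : ℤ) * (rowSum c' j : ℤ) :=
      fun p _ => colorSum c' (fun j => C p.1 j * (c' p : ℤ))
    rw [Finset.sum_congr rfl h1, Finset.sum_comm]
    have h2 : ∀ j : Fin l, (∑ p ∈ c'.support,
        C p.1 j * (c' p : ℤ) * (rowSum c' j : ℤ))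
        = ∑ i, C i j * (rowSum c' j : ℤ) * (rowSum c' i : ℤ) := by
      intro j
      have hcs := colorSum c' (fun i => C i j * (rowSum c' j : ℤ))
      rw [← hcs]
      apply Finset.sum_congr rfl
      intro p _
      ring
    rw [Finset.sum_congr rfl (fun j _ => h2 j), Finset.sum_comm]
    apply Finset.sum_congr rfl
    intro i _
    apply Finset.sum_congr rfl
    intro j _
    ring
  have hlin : ∑ p ∈ c'.support, C p.1 p.1 * (c' p : ℤ)
      = ∑ i, C i i * (rowSum c' i : ℤ) := colorSum c' (fun i => C i i)
  have hsplit1 : ∑ p ∈ c'.support, ∑ p' ∈ c'.support,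
      C p.1 p'.1 * ((min p.2 p'.2 : ℤ) + 1) * c' p * c' p'
      = (∑ p ∈ c'.support, ∑ p' ∈ c'.support,
          C p.1 p'.1 * (min p.2 p'.2 : ℤ) * c' p * c' p')
        + ∑ p ∈ c'.support, ∑ p' ∈ c'.support,
          C p.1 p'.1 * (c' p : ℤ) * (c' p' : ℤ) := by
    rw [← Finset.sum_add_distrib]
    apply Finset.sum_congr rfl
    intro p _
    rw [← Finset.sum_add_distrib]
    apply Finset.sum_congr rfl
    intro p' _
    ring
  have hsplit2 : ∑ p ∈ c'.support, C p.1 p.1 * ((p.2 : ℤ) + 1) * c' p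
      = (∑ p ∈ c'.support, C p.1 p.1 * (p.2 : ℤ) * c' p)
        + ∑ p ∈ c'.support, C p.1 p.1 * (c' p : ℤ) := by
    rw [← Finset.sum_add_distrib]
    apply Finset.sum_congr rfl
    intro p _
    ring
  unfold numQ numW
  rw [hDS, hSS, hsplit1, hsplit2, hcross, hlin]
  ring

lemma Qc_split (C : Matrix (Fin l) (Fin l) ℤ) (hsym : C.IsSymm)
    (c' : (Fin l × ℕ) →₀ ℕ) (b : Fin l → ℕ) :
    Qc C (up c' + bs b) = Qc C c' + Wc C (rowSum c') := by
  obtain ⟨w, hw⟩ := even_numW C hsym (rowSum c')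
  have hw2 : numW C (rowSum c') = w * 2 := by omega
  rw [Qc_eq, Qc_eq, Wc_eq, numQ_split C c' b, hw2, Int.add_mul_ediv_right _ _ two_ne_zero,
    Int.mul_ediv_cancel _ two_ne_zero]

lemma prod_split (c' : (Fin l × ℕ) →₀ ℕ) (b : Fin l → ℕ) :
    ∏ p ∈ (up c' + bs b).support, qp0 ((up c' + bs b) p)
      = (∏ i, qp0 (b i)) * ∏ p ∈ c'.support, qp0 (c' p) := by
  rw [prod_support_add _ _ (disj c' b) (fun _ n => qp0 n) (fun _ => qp0_zero)]
  rw [mul_comm]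
  congr 1
  · unfold bs
    rw [prod_support_emb (e0 l) _ (fun _ n => qp0 n)]
    rw [← Finset.prod_subset (Finset.subset_univ (equivFunOnFinite.symm b).support)]
    · apply Finset.prod_congr rfl
      intro i _
      simp
    · intro i _ hi
      have hb : b i = 0 := by simpa using notMem_support_iff.mp hi
      rw [hb, qp0_zero]
  · unfold up
    exact prod_support_emb (e1 l) c' (fun _ n => qp0 n)

lemma fwt_split (C : Matrix (Fin l) (Fin l) ℤ) (hsym : C.IsSymm)
    (c' : (Fin l × ℕ) →₀ ℕ) (b : Fin l → ℕ) :
    fwt C (up c' + bs b)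
      = (q0 ^ Wc C (rowSum c') * (∏ i, qp0 (b i))⁻¹) * fwt C c' := by
  unfold fwt
  rw [Qc_split C hsym c' b, zpow_add₀ q0_ne, prod_split, mul_inv]
  ring

end FermiAux

namespace FermiAux

open Finsupp Finset

variable {l : ℕ}

/-- configuration predicate -/
def cfgP (m : Fin l → ℕ) (k : Fin l →₀ ℕ) (c : (Fin l × ℕ) →₀ ℕ) : Prop :=
  (∀ i, rowSum c i = m i) ∧ (∀ i, degSum c i = k i)

lemma apply_le_rowSum (c : (Fin l × ℕ) →₀ ℕ) (p : Fin l × ℕ) :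
    c p ≤ rowSum c p.1 := by
  by_cases h : c p = 0
  · simp [h]
  · have hmem : p ∈ c.support := mem_support_iff.mpr h
    have := Finset.single_le_sum
      (f := fun p' => if p'.1 = p.1 then c p' else 0)
      (fun p' _ => by positivity) hmem
    simpa [rowSum] using this

lemma mul_apply_le_degSum (c : (Fin l × ℕ) →₀ ℕ) (p : Fin l × ℕ) :
    p.2 * c p ≤ degSum c p.1 := by
  by_cases h : c p = 0
  · simp [h, degSum]
  · have hmem : p ∈ c.support := mem_support_iff.mpr h
    have := Finset.single_le_sum
      (f := fun p' => if p'.1 = p.1 then p'.2 * c p' else 0)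
      (fun p' _ => by positivity) hmem
    simpa [degSum] using this

lemma cfg_finite (m : Fin l → ℕ) (k : Fin l →₀ ℕ) :
    {c : (Fin l × ℕ) →₀ ℕ | cfgP m k c}.Finite := by
  classical
  set N := ∑ i, k i with hN
  set M : (Fin l × ℕ) →₀ ℕ := Finsupp.onFinset
    (Finset.univ ×ˢ Finset.range (N + 1))
    (fun p => if p.2 = 0 then m p.1 else if p.2 ≤ k p.1 then k p.1 else 0)
    (by
      intro p hp
      rw [Finset.mem_product]
      refine ⟨Finset.mem_univ _, Finset.mem_range.mpr ?_⟩
      by_cases h0 : p.2 = 0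
      · omega
      · by_cases hle : p.2 ≤ k p.1
        · have : k p.1 ≤ N := Finset.single_le_sum
            (f := fun i => k i) (fun i _ => Nat.zero_le _) (Finset.mem_univ p.1)
          omega
        · simp [h0, hle] at hp) with hM
  apply ((Finset.Iic M).finite_toSet).subset
  intro c hc
  obtain ⟨hrow, hdeg⟩ := hc
  simp only [Finset.coe_Iic, Set.mem_Iic]
  rw [Finsupp.le_def]
  intro p
  rw [hM, Finsupp.onFinset_apply]
  obtain ⟨i, t⟩ := p
  cases t with
  | zero =>
    simp only [if_pos rfl]
    have := apply_le_rowSum c (i, 0)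
    rw [hrow i] at this
    exact this
  | succ t =>
    simp only [Nat.succ_ne_zero, if_false]
    have hd := mul_apply_le_degSum c (i, t + 1)
    rw [hdeg i] at hd
    simp only at hd
    by_cases hle : t + 1 ≤ k i
    · simp only [if_pos hle]
      have h1 : c (i, t + 1) ≤ (t + 1) * c (i, t + 1) :=
        Nat.le_mul_of_pos_left _ (Nat.succ_pos t)
      omega
    · simp only [if_neg hle]
      by_contra hpos
      have hc : 0 < c (i, t + 1) := by omega
      have h2 : t + 1 ≤ (t + 1) * c (i, t + 1) :=
        Nat.le_mul_of_pos_right (t + 1) hc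
      omega

/-- the finset of configurations -/
def cfgF (m : Fin l → ℕ) (k : Fin l →₀ ℕ) : Finset ((Fin l × ℕ) →₀ ℕ) :=
  (cfg_finite m k).toFinset

lemma mem_cfgF {m : Fin l → ℕ} {k : Fin l →₀ ℕ} {c : (Fin l × ℕ) →₀ ℕ} :
    c ∈ cfgF m k ↔ cfgP m k c := Set.Finite.mem_toFinset _

lemma Iser_coeff (C : Matrix (Fin l) (Fin l) ℤ) (m : Fin l → ℕ) (k : Fin l →₀ ℕ) :
    Iser C m k = ∑ c ∈ cfgF m k, fwt C c := by
  simp only [Iser]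
  exact finsum_cond_eq_sum_of_cond_iff _ (fun {c} _ => mem_cfgF.symm)

end FermiAux

namespace FermiAux

open Finsupp Finset

variable {l : ℕ}

lemma ea_apply (b : Fin l → ℕ) (i : Fin l) :
    (Finsupp.equivFunOnFinite.symm b) i = b i := rfl

lemma Iser_rec (C : Matrix (Fin l) (Fin l) ℤ) (hsym : C.IsSymm) (m : Fin l → ℕ) :
    Iser C m =
      ∑ a ∈ Finset.Iic m,
        (MvPowerSeries.monomial (R := Kq) (Finsupp.equivFunOnFinite.symm a)
          (q0 ^ Wc C a * (∏ i, qp0 (m i - a i))⁻¹)) * Iser C a := by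
  classical
  funext k
  have hR : (∑ a ∈ Finset.Iic m,
      (MvPowerSeries.monomial (R := Kq) (Finsupp.equivFunOnFinite.symm a)
        (q0 ^ Wc C a * (∏ i, qp0 (m i - a i))⁻¹)) * Iser C a) k
      = ∑ a ∈ Finset.Iic m,
          if Finsupp.equivFunOnFinite.symm a ≤ k then
            (q0 ^ Wc C a * (∏ i, qp0 (m i - a i))⁻¹)
              * Iser C a (k - Finsupp.equivFunOnFinite.symm a)
          else 0 := by
    calc (∑ a ∈ Finset.Iic m,
        (MvPowerSeries.monomial (R := Kq) (Finsupp.equivFunOnFinite.symm a)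
          (q0 ^ Wc C a * (∏ i, qp0 (m i - a i))⁻¹)) * Iser C a) k
        = ∑ a ∈ Finset.Iic m, MvPowerSeries.coeff k
            ((MvPowerSeries.monomial (R := Kq) (Finsupp.equivFunOnFinite.symm a)
              (q0 ^ Wc C a * (∏ i, qp0 (m i - a i))⁻¹)) * Iser C a) :=
          map_sum (MvPowerSeries.coeff k) _ _
      _ = _ := Finset.sum_congr rfl fun a _ => by
          rw [MvPowerSeries.coeff_monomial_mul]
          rfl
  rw [hR, Iser_coeff, ← Finset.sum_filter]
  have hco : ∀ a ∈ (Finset.Iic m).filter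
      (fun a => Finsupp.equivFunOnFinite.symm a ≤ k),
      (q0 ^ Wc C a * (∏ i, qp0 (m i - a i))⁻¹)
          * Iser C a (k - Finsupp.equivFunOnFinite.symm a)
        = ∑ c' ∈ cfgF a (k - Finsupp.equivFunOnFinite.symm a),
            (q0 ^ Wc C a * (∏ i, qp0 (m i - a i))⁻¹) * fwt C c' := by
    intro a _
    rw [Iser_coeff, Finset.mul_sum]
  rw [Finset.sum_congr rfl hco]
  have hmaps : ∀ c ∈ cfgF m k, rowSum (dn c) ∈
      (Finset.Iic m).filter (fun a => Finsupp.equivFunOnFinite.symm a ≤ k) := by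
    intro c hc
    obtain ⟨hrow, hdeg⟩ := mem_cfgF.mp hc
    rw [Finset.mem_filter, Finset.mem_Iic]
    constructor
    · rw [Pi.le_def]
      intro i
      have h1 := rowSum_dn c i
      rw [hrow i] at h1
      omega
    · rw [Finsupp.le_def]
      intro i
      rw [ea_apply]
      have h1 := degSum_dn c i
      rw [hdeg i] at h1
      omega
  rw [← Finset.sum_fiberwise_of_maps_to hmaps (fwt C)]
  apply Finset.sum_congr rfl
  intro a ha
  rw [Finset.mem_filter, Finset.mem_Iic] at ha
  obtain ⟨ham, hak⟩ := ha
  have ham' : ∀ i, a i ≤ m i := ham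
  have hak' : ∀ i, a i ≤ k i := by
    intro i
    have := hak
    rw [Finsupp.le_def] at this
    simpa [ea_apply] using this i
  have hsub : ∀ i, (k - Finsupp.equivFunOnFinite.symm a) i = k i - a i := by
    intro i
    rw [Finsupp.tsub_apply, ea_apply]
  apply Finset.sum_nbij' dn (fun c' => up c' + bs (fun i => m i - a i))
  · -- hi
    intro c hc
    rw [Finset.mem_filter] at hc
    obtain ⟨hc1, hc2⟩ := hc
    obtain ⟨hrow, hdeg⟩ := mem_cfgF.mp hc1
    rw [mem_cfgF]
    constructor
    · intro i
      exact congrFun hc2 i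
    · intro i
      have h1 := degSum_dn c i
      rw [hdeg i] at h1
      rw [hsub i, ← congrFun hc2 i]
      omega
  · -- hj
    intro c' hc'
    obtain ⟨hrow, hdeg⟩ := mem_cfgF.mp hc'
    rw [Finset.mem_filter, mem_cfgF]
    refine ⟨⟨fun i => ?_, fun i => ?_⟩, ?_⟩
    · rw [rowSum_split, hrow i]
      have := ham' i
      omega
    · rw [degSum_split, hdeg i, hsub i, hrow i]
      have := hak' i
      omega
    · rw [dn_up_bs]
      funext i
      exact hrow i
  · -- left_inv
    intro c hc
    rw [Finset.mem_filter] at hc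
    obtain ⟨hc1, hc2⟩ := hc
    obtain ⟨hrow, _⟩ := mem_cfgF.mp hc1
    have hb : (fun i => m i - a i) = (fun i => c (i, 0)) := by
      funext i
      have h1 := rowSum_dn c i
      have h2 := congrFun hc2 i
      rw [hrow i, h2] at h1
      omega
    rw [hb, decomp]
  · -- right_inv
    intro c' _
    exact dn_up_bs c' _
  · -- values
    intro c hc
    rw [Finset.mem_filter] at hc
    obtain ⟨hc1, hc2⟩ := hc
    obtain ⟨hrow, _⟩ := mem_cfgF.mp hc1
    have hb : (fun i => c (i, 0)) = (fun i => m i - a i) := by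
      funext i
      have h1 := rowSum_dn c i
      have h2 := congrFun hc2 i
      rw [hrow i, h2] at h1
      omega
    conv_lhs => rw [← decomp c]
    rw [fwt_split C hsym (dn c) _, hc2]
    have hprod : (∏ i, qp0 (c (i, 0))) = ∏ i, qp0 (m i - a i) :=
      Finset.prod_congr rfl (fun i _ => by rw [congrFun hb i])
    rw [hprod]

end FermiAux

namespace FermiAux

open Finsupp Finset

variable {l : ℕ}

lemma rowSum_zero (i : Fin l) : rowSum (0 : (Fin l × ℕ) →₀ ℕ) i = 0 := by
  unfold rowSum; simp

lemma degSum_zero (i : Fin l) : degSum (0 : (Fin l × ℕ) →₀ ℕ) i = 0 := by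
  unfold degSum; simp

lemma Iser_zero (C : Matrix (Fin l) (Fin l) ℤ) : Iser C (0 : Fin l → ℕ) = 1 := by
  classical
  funext k
  rw [Iser_coeff]
  by_cases hk : k = 0
  · subst hk
    have hset : cfgF (0 : Fin l → ℕ) (0 : Fin l →₀ ℕ) = {0} := by
      ext c
      rw [mem_cfgF, Finset.mem_singleton]
      constructor
      · rintro ⟨h1, _⟩
        ext p
        have h2 := apply_le_rowSum c p
        rw [h1 p.1] at h2
        simpa using h2
      · rintro rfl
        exact ⟨fun i => by simp [rowSum_zero], fun i => by simp [degSum_zero]⟩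
    rw [hset, Finset.sum_singleton]
    unfold fwt
    have hQ : Qc C 0 = 0 := by unfold Qc; simp
    rw [hQ]
    have hone : (1 : MvPowerSeries (Fin l) Kq) 0 = 1 := by
      show MvPowerSeries.coeff 0 (1 : MvPowerSeries (Fin l) Kq) = 1
      exact MvPowerSeries.coeff_zero_one
    rw [hone]
    simp
  · have hset : cfgF (0 : Fin l → ℕ) k = ∅ := by
      ext c
      simp only [Finset.notMem_empty, iff_false]
      rw [mem_cfgF]
      rintro ⟨h1, h2⟩
      have hc0 : c = 0 := by
        ext p
        have h3 := apply_le_rowSum c p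
        rw [h1 p.1] at h3
        simpa using h3
      apply hk
      ext i
      rw [← h2 i, hc0, degSum_zero]
      rfl
    rw [hset, Finset.sum_empty]
    have hone : (1 : MvPowerSeries (Fin l) Kq) k = 0 := by
      show MvPowerSeries.coeff k (1 : MvPowerSeries (Fin l) Kq) = 0
      rw [MvPowerSeries.coeff_one, if_neg hk]
    rw [hone]

end FermiAux


theorem stmt_0 (l : ℕ) (hl : 1 ≤ l) (C : Matrix (Fin l) (Fin l) ℤ)
    (hsym : C.IsSymm) :
    (∀ m : Fin l → ℕ, Iser C m =
      ∑ a ∈ Finset.Iic m,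
        (MvPowerSeries.monomial (R := Kq) (Finsupp.equivFunOnFinite.symm a)
          (q0 ^ Wc C a * (∏ i, qp0 (m i - a i))⁻¹)) * Iser C a)
    ∧ (∀ Itld : (Fin l → ℕ) → MvPowerSeries (Fin l) Kq, Itld 0 = 1 →
        (∀ m : Fin l → ℕ, Itld m =
          ∑ a ∈ Finset.Iic m,
            (MvPowerSeries.monomial (R := Kq) (Finsupp.equivFunOnFinite.symm a)
              (q0 ^ Wc C a * (∏ i, qp0 (m i - a i))⁻¹)) * Itld a) →
        Itld = Iser C) := by
  classical
  constructor
  · exact fun m => FermiAux.Iser_rec C hsym m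
  · intro Itld h0 hrec
    have key : ∀ N : ℕ, ∀ m : Fin l → ℕ, (∑ i, m i) = N → Itld m = Iser C m := by
      intro N
      induction N using Nat.strong_induction_on with
      | _ N IH =>
        intro m hm
        by_cases hm0 : m = 0
        · subst hm0
          rw [h0, FermiAux.Iser_zero]
        · have hIH : ∀ a ∈ Finset.Iic m, a ≠ m → Itld a = Iser C a := by
            intro a ha hne
            have hle : ∀ i, a i ≤ m i := Finset.mem_Iic.mp ha
            have hlt : (∑ i, a i) < N := by
              rw [← hm]
              apply Finset.sum_lt_sum (fun i _ => hle i)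
              obtain ⟨i, hi⟩ := Function.ne_iff.mp hne
              exact ⟨i, Finset.mem_univ i, lt_of_le_of_ne (hle i) hi⟩
            exact IH _ hlt a rfl
          set wm : MvPowerSeries (Fin l) Kq :=
            MvPowerSeries.monomial (R := Kq) (Finsupp.equivFunOnFinite.symm m)
              (q0 ^ Wc C m * (∏ i, qp0 (m i - m i))⁻¹) with hwm
          have hsub : Itld m - Iser C m = wm * (Itld m - Iser C m) := by
            conv_lhs => rw [hrec m, FermiAux.Iser_rec C hsym m]
            rw [← Finset.sum_sub_distrib,
              Finset.sum_eq_single_of_mem m (Finset.mem_Iic.mpr le_rfl)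
                (fun a ha hne => by rw [hIH a ha hne, sub_self]),
              mul_sub, hwm]
          have hd : Finsupp.equivFunOnFinite.symm m ≠ 0 := by
            intro h
            apply hm0
            funext i
            have h2 := DFunLike.congr_fun h i
            simpa [FermiAux.ea_apply] using h2
          have hcc : MvPowerSeries.constantCoeff (σ := Fin l) (R := Kq) (1 - wm) = 1 := by
            rw [map_sub, map_one]
            have hcw : MvPowerSeries.constantCoeff (σ := Fin l) (R := Kq) wm = 0 := by
              rw [hwm, ← MvPowerSeries.coeff_zero_eq_constantCoeff_apply,
                MvPowerSeries.coeff_monomial,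
                if_neg (fun hc => hd hc.symm)]
            rw [hcw, sub_zero]
          have hinv := MvPowerSeries.mul_invOfUnit (1 - wm) 1
            (by rw [hcc, Units.val_one])
          have hzero : (1 - wm) * (Itld m - Iser C m) = 0 := by
            rw [sub_mul, one_mul]
            nth_rewrite 1 [hsub]
            rw [sub_self]
          have hD : Itld m - Iser C m = 0 := by
            have h2 : (Itld m - Iser C m)
                * ((1 - wm) * MvPowerSeries.invOfUnit (1 - wm) 1)
                = Itld m - Iser C m := by rw [hinv, mul_one]
            rw [← h2, ← mul_assoc, mul_comm (Itld m - Iser C m) (1 - wm),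
              hzero, zero_mul]
          exact sub_eq_zero.mp hD
    funext m
    exact key (∑ i, m i) m rfl


end
end

section
/- For every m ∈ ℕ^l the fermionic power series satisfies J_m(q,z) = ∑_{0 ≤ a ≤ m} z^a q^{W(a)} (∏_{i=1}^l (q_i; q_i)_{m_i − a_i})^{−1} J_a(q,z), where 0 ≤ a ≤ m means 0 ≤ a_i ≤ m_i for all i, and (J_m)_{m∈ℕ^l} is the unique family of formal power series in ℚ(q)[[z_1,…,z_l]] with J_0 = 1 satisfying this recursion. -/
/- STATEMENT 1: For a symmetrized Cartan matrix B (B_{ii} = 2d_i), the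
   fermionic power series J_m(q,z) ∈ ℚ(q)[[z_1,…,z_l]] satisfy
     J_m = ∑_{0≤a≤m} z^a q^{W(a)} (∏_i (q_i;q_i)_{m_i−a_i})⁻¹ J_a,
   and (J_m) is the unique family with J_0 = 1 satisfying this recursion. -/

noncomputable section

open scoped BigOperators

/-- the variable q -/
def q1 : Kq := RatFunc.X

/-- `(q_i;q_i)_n = ∏_{k=1}^n (1 − q^{d_i k})` -/
def qpd (di : ℕ) (n : ℕ) : Kq := ∏ k ∈ Finset.range n, (1 - (q1 ^ di) ^ (k + 1))

/-- `E = (1/2)∑ min(t,t') B_{ij} n_i^{(t)} n_j^{(t')} − ∑_t t ∑_i d_i n_i^{(t)}`;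
the double sum is even (as B_{ii} = 2d_i), so integer division by 2 is exact. -/
def Eb {l : ℕ} (B : Matrix (Fin l) (Fin l) ℤ) (d : Fin l → ℕ)
    (c : (Fin l × ℕ) →₀ ℕ) : ℤ :=
  (∑ p ∈ c.support, ∑ p' ∈ c.support,
      B p.1 p'.1 * (min p.2 p'.2 : ℤ) * c p * c p') / 2
    - ∑ p ∈ c.support, (d p.1 : ℤ) * (p.2 : ℤ) * c p

/-- `W(a) = (1/2)∑ B_{ij} a_i a_j − ∑ d_i a_i`; the double sum is even, so
integer division by 2 is exact. -/
def Wb {l : ℕ} (B : Matrix (Fin l) (Fin l) ℤ) (d : Fin l → ℕ) (a : Fin l → ℕ) : ℤ :=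
  (∑ i, ∑ j, B i j * a i * a j) / 2 - ∑ i, (d i : ℤ) * a i

/-- The fermionic power series `J_m(q,z) ∈ ℚ(q)[[z_1,…,z_l]]`: the coefficient
of the monomial `z^k` is the (finite) sum over all configurations
`c = (n_i^{(t)})` with row sums `m` and colour-degrees `k` of
`q^E / ∏_{t,i} (q_i;q_i)_{n_i^{(t)}}`. -/
def Jser {l : ℕ} (B : Matrix (Fin l) (Fin l) ℤ) (d : Fin l → ℕ) (m : Fin l → ℕ) :
    MvPowerSeries (Fin l) Kq :=
  fun k => ∑ᶠ (c : (Fin l × ℕ) →₀ ℕ)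
    (_ : (∀ i, rowSum c i = m i) ∧ (∀ i, degSum c i = k i)),
      q1 ^ Eb B d c * (∏ p ∈ c.support, qpd (d p.1) (c p))⁻¹

namespace Aux
variable {l : ℕ}

lemma succ_inj : Function.Injective (fun p : Fin l × ℕ => (p.1, p.2 + 1)) := by
  intro p q h
  simpa [Prod.ext_iff] using h

def emb : (Fin l × ℕ) ↪ (Fin l × ℕ) := ⟨fun p => (p.1, p.2 + 1), succ_inj⟩

def shf (c : (Fin l × ℕ) →₀ ℕ) : (Fin l × ℕ) →₀ ℕ :=
  Finsupp.comapDomain (fun p => (p.1, p.2 + 1)) c succ_inj.injOn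

@[simp] lemma shf_apply (c : (Fin l × ℕ) →₀ ℕ) (i : Fin l) (t : ℕ) :
    shf c (i, t) = c (i, t + 1) := rfl

def unshf (b : Fin l → ℕ) (c' : (Fin l × ℕ) →₀ ℕ) : (Fin l × ℕ) →₀ ℕ :=
  Finsupp.embDomain emb c' + ∑ i : Fin l, Finsupp.single (i, (0:ℕ)) (b i)

@[simp] lemma unshf_apply_zero (b : Fin l → ℕ) (c' : (Fin l × ℕ) →₀ ℕ) (i : Fin l) :
    unshf b c' (i, 0) = b i := by
  have h1 : Finsupp.embDomain emb c' (i, (0:ℕ)) = 0 := by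
    apply Finsupp.embDomain_notin_range
    rintro ⟨p, hp⟩
    simpa [emb] using congrArg Prod.snd hp
  have h2 : (∑ j : Fin l, Finsupp.single (j, (0:ℕ)) (b j)) (i, 0) = b i := by
    rw [Finsupp.finset_sum_apply]
    simp [Finsupp.single_apply, Prod.ext_iff]
  rw [unshf, Finsupp.add_apply, h1, h2]; ring

@[simp] lemma unshf_apply_succ (b : Fin l → ℕ) (c' : (Fin l × ℕ) →₀ ℕ) (i : Fin l) (t : ℕ) :
    unshf b c' (i, t + 1) = c' (i, t) := by
  have h1 : Finsupp.embDomain emb c' (i, t + 1) = c' (i, t) := by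
    have : ((i, t + 1) : Fin l × ℕ) = emb (i, t) := rfl
    rw [this, Finsupp.embDomain_apply_self]
  have h2 : (∑ j : Fin l, Finsupp.single (j, (0:ℕ)) (b j)) (i, t + 1) = 0 := by
    rw [Finsupp.finset_sum_apply]
    simp [Finsupp.single_apply, Prod.ext_iff]
  rw [unshf, Finsupp.add_apply, h1, h2]; ring

@[simp] lemma shf_unshf (b : Fin l → ℕ) (c' : (Fin l × ℕ) →₀ ℕ) : shf (unshf b c') = c' := by
  ext p
  obtain ⟨i, t⟩ := p
  simp

lemma unshf_shf (c : (Fin l × ℕ) →₀ ℕ) : unshf (fun i => c (i, 0)) (shf c) = c := by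
  ext p
  obtain ⟨i, t⟩ := p
  cases t with
  | zero => simp
  | succ t => simp


def box (l N : ℕ) : Finset (Fin l × ℕ) := Finset.univ ×ˢ Finset.range N

def Nc (c : (Fin l × ℕ) →₀ ℕ) : ℕ := c.support.sup (·.2)

lemma supp_sub_box (c : (Fin l × ℕ) →₀ ℕ) : c.support ⊆ box l (Nc c + 1) := by
  intro p hp
  simp only [box, Finset.mem_product, Finset.mem_univ, Finset.mem_range, true_and]
  exact Nat.lt_succ_of_le (Finset.le_sup (f := (·.2)) hp)

lemma supp_shf_sub_box (c : (Fin l × ℕ) →₀ ℕ) : (shf c).support ⊆ box l (Nc c) := by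
  intro p hp
  simp only [box, Finset.mem_product, Finset.mem_univ, Finset.mem_range, true_and]
  have : c (p.1, p.2 + 1) ≠ 0 := by
    have := Finsupp.mem_support_iff.mp hp
    rwa [show p = (p.1, p.2) from rfl, shf_apply] at this
  have hm : (p.1, p.2 + 1) ∈ c.support := Finsupp.mem_support_iff.mpr this
  have := Finset.le_sup (f := (·.2)) hm
  exact Nat.lt_of_succ_le this

lemma rowSum_eq_box {c : (Fin l × ℕ) →₀ ℕ} {N : ℕ} (h : c.support ⊆ box l N) (i : Fin l) :
    rowSum c i = ∑ t ∈ Finset.range N, c (i, t) := by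
  unfold rowSum
  rw [Finset.sum_subset h (by intro p _ hp; simp [Finsupp.notMem_support_iff.mp hp])]
  rw [box, Finset.sum_product]
  rw [Finset.sum_comm]
  simp

lemma degSum_eq_box {c : (Fin l × ℕ) →₀ ℕ} {N : ℕ} (h : c.support ⊆ box l N) (i : Fin l) :
    degSum c i = ∑ t ∈ Finset.range N, t * c (i, t) := by
  unfold degSum
  rw [Finset.sum_subset h (by intro p _ hp; simp [Finsupp.notMem_support_iff.mp hp])]
  rw [box, Finset.sum_product]
  rw [Finset.sum_comm]
  simp

lemma rowSum_shf_add (c : (Fin l × ℕ) →₀ ℕ) (i : Fin l) :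
    rowSum c i = c (i, 0) + rowSum (shf c) i := by
  rw [rowSum_eq_box (supp_sub_box c) i, rowSum_eq_box (supp_shf_sub_box c) i,
    Finset.sum_range_succ']
  simp [add_comm]

lemma degSum_shf_add (c : (Fin l × ℕ) →₀ ℕ) (i : Fin l) :
    degSum c i = degSum (shf c) i + rowSum (shf c) i := by
  rw [degSum_eq_box (supp_sub_box c) i, degSum_eq_box (supp_shf_sub_box c) i,
    rowSum_eq_box (supp_shf_sub_box c) i, Finset.sum_range_succ']
  simp [add_mul, Finset.sum_add_distrib]

lemma qpd_zero (di : ℕ) : qpd di 0 = 1 := by simp [qpd]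

lemma prod_qpd_box (d : Fin l → ℕ) {c : (Fin l × ℕ) →₀ ℕ} {N : ℕ} (h : c.support ⊆ box l N) :
    ∏ p ∈ c.support, qpd (d p.1) (c p) = ∏ p ∈ box l N, qpd (d p.1) (c p) := by
  apply Finset.prod_subset h
  intro p _ hp
  simp [Finsupp.notMem_support_iff.mp hp, qpd_zero]

lemma prod_qpd_shift (d : Fin l → ℕ) (c : (Fin l × ℕ) →₀ ℕ) :
    ∏ p ∈ c.support, qpd (d p.1) (c p)
      = (∏ i : Fin l, qpd (d i) (c (i, 0))) * ∏ p ∈ (shf c).support, qpd (d p.1) (shf c p) := by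
  rw [prod_qpd_box d (supp_sub_box c), prod_qpd_box d (supp_shf_sub_box c)]
  rw [box, box, Finset.prod_product, Finset.prod_product]
  rw [← Finset.prod_mul_distrib]
  apply Finset.prod_congr rfl
  intro i _
  rw [Finset.prod_range_succ']
  rw [mul_comm]
  simp


lemma even_double_sum {ι : Type*} [DecidableEq ι] (M : ι → ι → ℤ)
    (hsym : ∀ p q, M p q = M q p) (hdiag : ∀ p, Even (M p p)) (S : Finset ι) :
    Even (∑ p ∈ S, ∑ q ∈ S, M p q) := by
  induction S using Finset.induction_on with
  | empty => simp
  | @insert a S ha ih =>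
    rw [Finset.sum_insert ha, Finset.sum_insert ha]
    have hrw : ∀ p ∈ S, ∑ q ∈ insert a S, M p q = M p a + ∑ q ∈ S, M p q :=
      fun p _ => Finset.sum_insert ha
    rw [Finset.sum_congr rfl hrw, Finset.sum_add_distrib]
    have h2 : ∑ p ∈ S, M p a = ∑ q ∈ S, M a q := Finset.sum_congr rfl fun p _ => hsym p a
    rw [h2]
    obtain ⟨x, hx⟩ := hdiag a
    obtain ⟨y, hy⟩ := ih
    exact ⟨x + (∑ q ∈ S, M a q) + y, by rw [hx, hy]; ring⟩

section Ebshift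
variable {B : Matrix (Fin l) (Fin l) ℤ} {d : Fin l → ℕ}

lemma Qd_eq_box {c : (Fin l × ℕ) →₀ ℕ} {N : ℕ} (h : c.support ⊆ box l N) :
    ∑ p ∈ c.support, ∑ p' ∈ c.support, B p.1 p'.1 * ((min p.2 p'.2 : ℕ) : ℤ) * c p * c p'
      = ∑ p ∈ box l N, ∑ p' ∈ box l N, B p.1 p'.1 * ((min p.2 p'.2 : ℕ) : ℤ) * c p * c p' := by
  rw [Finset.sum_subset h (by intro p _ hp; simp [Finsupp.notMem_support_iff.mp hp])]
  apply Finset.sum_congr rfl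
  intro p _
  rw [Finset.sum_subset h (by intro p' _ hp'; simp [Finsupp.notMem_support_iff.mp hp'])]

lemma Ld_eq_box {c : (Fin l × ℕ) →₀ ℕ} {N : ℕ} (h : c.support ⊆ box l N) :
    ∑ p ∈ c.support, (d p.1 : ℤ) * (p.2 : ℤ) * c p
      = ∑ p ∈ box l N, (d p.1 : ℤ) * (p.2 : ℤ) * c p := by
  rw [Finset.sum_subset h (by intro p _ hp; simp [Finsupp.notMem_support_iff.mp hp])]

lemma sum_box {M : Type*} [AddCommMonoid M] (N : ℕ) (F : Fin l × ℕ → M) :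
    ∑ p ∈ box l N, F p = ∑ i : Fin l, ∑ t ∈ Finset.range N, F (i, t) := by
  rw [box, Finset.sum_product]

lemma double_box_sum {M : Type*} [AddCommMonoid M] (N : ℕ)
    (F : (Fin l × ℕ) → (Fin l × ℕ) → M) :
    ∑ p ∈ box l N, ∑ p' ∈ box l N, F p p'
      = ∑ i : Fin l, ∑ j : Fin l, ∑ t ∈ Finset.range N, ∑ s ∈ Finset.range N, F (i, t) (j, s) := by
  rw [sum_box]
  refine Finset.sum_congr rfl fun i _ => ?_
  have h1 : ∀ t ∈ Finset.range N, ∑ p' ∈ box l N, F (i, t) p'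
      = ∑ j : Fin l, ∑ s ∈ Finset.range N, F (i, t) (j, s) := fun t _ => sum_box N _
  rw [Finset.sum_congr rfl h1, Finset.sum_comm]

lemma inner_min_sum (b : ℤ) (x y : ℕ → ℤ) (N : ℕ) :
    ∑ t ∈ Finset.range (N+1), ∑ s ∈ Finset.range (N+1), b * ((min t s : ℕ) : ℤ) * x t * y s
      = (∑ t ∈ Finset.range N, ∑ s ∈ Finset.range N, b * ((min t s : ℕ) : ℤ) * x (t+1) * y (s+1))
        + b * (∑ t ∈ Finset.range N, x (t+1)) * (∑ s ∈ Finset.range N, y (s+1)) := by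
  rw [Finset.sum_range_succ']
  have h0 : ∑ s ∈ Finset.range (N+1), b * ((min 0 s : ℕ) : ℤ) * x 0 * y s = 0 := by
    simp
  rw [h0, add_zero]
  have hstep : ∀ t ∈ Finset.range N,
      ∑ s ∈ Finset.range (N+1), b * ((min (t+1) s : ℕ) : ℤ) * x (t+1) * y s
        = (∑ s ∈ Finset.range N, b * ((min t s : ℕ) : ℤ) * x (t+1) * y (s+1))
          + b * x (t+1) * ∑ s ∈ Finset.range N, y (s+1) := by
    intro t _
    rw [Finset.sum_range_succ']
    have h1 : ∀ s ∈ Finset.range N, b * ((min (t+1) (s+1) : ℕ) : ℤ) * x (t+1) * y (s+1)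
        = b * ((min t s : ℕ) : ℤ) * x (t+1) * y (s+1) + b * x (t+1) * y (s+1) := by
      intro s _
      rw [Nat.succ_min_succ]
      push_cast
      ring
    rw [Finset.sum_congr rfl h1, Finset.sum_add_distrib]
    simp [Finset.mul_sum]
  rw [Finset.sum_congr rfl hstep, Finset.sum_add_distrib]
  congr 1
  rw [← Finset.sum_mul, ← Finset.mul_sum]

lemma Eb_shift (hsym : B.IsSymm) (hdiag : ∀ i, B i i = 2 * d i) (c : (Fin l × ℕ) →₀ ℕ) :
    Eb B d c = Wb B d (fun i => rowSum (shf c) i) + Eb B d (shf c) := by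
  set c' := shf c with hc'
  set N := Nc c with hN
  have hb : c.support ⊆ box l (N + 1) := supp_sub_box c
  have hb' : c'.support ⊆ box l N := supp_shf_sub_box c
  have hacast : ∀ i : Fin l, ((rowSum c' i : ℕ) : ℤ) = ∑ t ∈ Finset.range N, (c' (i, t) : ℤ) := by
    intro i
    rw [rowSum_eq_box hb' i]
    push_cast
    rfl
  have hQ : ∑ p ∈ c.support, ∑ p' ∈ c.support, B p.1 p'.1 * (min p.2 p'.2 : ℤ) * c p * c p'
      = (∑ p ∈ c'.support, ∑ p' ∈ c'.support, B p.1 p'.1 * (min p.2 p'.2 : ℤ) * c' p * c' p')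
        + ∑ i, ∑ j, B i j * (rowSum c' i : ℤ) * (rowSum c' j : ℤ) := by
    simp_rw [← Nat.cast_min]
    rw [Qd_eq_box hb, Qd_eq_box hb', double_box_sum, double_box_sum,
      ← Finset.sum_add_distrib]
    refine Finset.sum_congr rfl fun i _ => ?_
    rw [← Finset.sum_add_distrib]
    refine Finset.sum_congr rfl fun j _ => ?_
    have := inner_min_sum (B i j) (fun t => (c (i, t) : ℤ)) (fun s => (c (j, s) : ℤ)) N
    rw [this, hacast i, hacast j]
    rfl
  have hL : ∑ p ∈ c.support, (d p.1 : ℤ) * (p.2 : ℤ) * c p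
      = (∑ p ∈ c'.support, (d p.1 : ℤ) * (p.2 : ℤ) * c' p)
        + ∑ i, (d i : ℤ) * (rowSum c' i : ℤ) := by
    rw [Ld_eq_box hb, Ld_eq_box hb', sum_box, sum_box, ← Finset.sum_add_distrib]
    refine Finset.sum_congr rfl fun i _ => ?_
    rw [Finset.sum_range_succ']
    have h1 : ∀ t ∈ Finset.range N, (d i : ℤ) * ((t+1 : ℕ) : ℤ) * c (i, t+1)
        = (d i : ℤ) * (t : ℤ) * c' (i, t) + (d i : ℤ) * c' (i, t) := by
      intro t _
      rw [show c' (i, t) = c (i, t + 1) from rfl]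
      push_cast
      ring
    rw [Finset.sum_congr rfl h1, Finset.sum_add_distrib]
    rw [hacast i, Finset.mul_sum]
    push_cast
    ring
  have hevenQ' : Even (∑ p ∈ c'.support, ∑ p' ∈ c'.support,
      B p.1 p'.1 * (min p.2 p'.2 : ℤ) * c' p * c' p') := by
    apply even_double_sum
    · intro p q
      rw [hsym.apply, min_comm]
      ring
    · intro p
      exact ⟨(d p.1 : ℤ) * (min p.2 p.2 : ℤ) * c' p * c' p, by rw [hdiag]; ring⟩
  have hevenA : Even (∑ i, ∑ j, B i j * (rowSum c' i : ℤ) * (rowSum c' j : ℤ)) := by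
    apply even_double_sum
    · intro p q
      rw [hsym.apply]
      ring
    · intro p
      exact ⟨(d p : ℤ) * (rowSum c' p : ℤ) * (rowSum c' p : ℤ), by rw [hdiag]; ring⟩
  rw [Eb, Eb, Wb, hQ, hL]
  obtain ⟨x, hx⟩ := hevenQ'
  obtain ⟨y, hy⟩ := hevenA
  rw [hx, hy]
  have h2 : ∀ z : ℤ, (z + z) = 2 * z := fun z => by ring
  omega

end Ebshift

lemma le_rowSum (c : (Fin l × ℕ) →₀ ℕ) (i : Fin l) (t : ℕ) : c (i, t) ≤ rowSum c i := by
  by_cases h : (i, t) ∈ c.support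
  · calc c (i, t) = if ((i,t) : Fin l × ℕ).1 = i then c (i, t) else 0 := by simp
    _ ≤ rowSum c i := Finset.single_le_sum (f := fun p => if p.1 = i then c p else 0)
        (fun p _ => by positivity) h
  · simp [Finsupp.notMem_support_iff.mp h]

lemma le_degSum (c : (Fin l × ℕ) →₀ ℕ) (i : Fin l) (t : ℕ) : t * c (i, t) ≤ degSum c i := by
  by_cases h : (i, t) ∈ c.support
  · calc t * c (i, t) = if ((i,t) : Fin l × ℕ).1 = i then ((i,t) : Fin l × ℕ).2 * c (i, t) else 0 := by simp
    _ ≤ degSum c i := Finset.single_le_sum (f := fun p => if p.1 = i then p.2 * c p else 0)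
        (fun p _ => by positivity) h
  · simp [Finsupp.notMem_support_iff.mp h]

lemma T_finite (m : Fin l → ℕ) (k : Fin l →₀ ℕ) :
    {c : (Fin l × ℕ) →₀ ℕ | (∀ i, rowSum c i = m i) ∧ (∀ i, degSum c i = k i)}.Finite := by
  classical
  set K := ∑ i, k i with hK
  set M := ∑ i, m i with hM
  set C : (Fin l × ℕ) →₀ ℕ := ∑ p ∈ box l (K + 1), Finsupp.single p M with hC
  have hCapp : ∀ p ∈ box l (K + 1), M ≤ C p := by
    intro p hp
    rw [hC, Finsupp.finset_sum_apply]
    calc M = ∑ q ∈ box l (K+1), if q = p then M else 0 := by rw [Finset.sum_ite_eq' _ p, if_pos hp]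
    _ ≤ _ := Finset.sum_le_sum fun q _ => by rw [Finsupp.single_apply]
  apply Set.Finite.subset (Set.finite_Iic C)
  rintro c ⟨hrow, hdeg⟩
  rw [Set.mem_Iic, Finsupp.le_def]
  intro p
  obtain ⟨i, t⟩ := p
  by_cases h : c (i, t) = 0
  · simp [h]
  · have h1 : c (i, t) ≤ M := by
      calc c (i, t) ≤ rowSum c i := le_rowSum c i t
      _ = m i := hrow i
      _ ≤ M := Finset.single_le_sum (f := fun j => m j) (fun j _ => Nat.zero_le _)
            (Finset.mem_univ i)
    have h2 : t < K + 1 := by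
      have : t * c (i, t) ≤ degSum c i := le_degSum c i t
      rw [hdeg i] at this
      have hki : k i ≤ K := Finset.single_le_sum (f := fun j => k j) (fun j _ => Nat.zero_le _)
            (Finset.mem_univ i)
      have : t ≤ t * c (i, t) := Nat.le_mul_of_pos_right t (Nat.pos_of_ne_zero h)
      omega
    refine le_trans h1 (hCapp (i, t) ?_)
    simp [box, h2]


def fconf (B : Matrix (Fin l) (Fin l) ℤ) (d : Fin l → ℕ) (c : (Fin l × ℕ) →₀ ℕ) : Kq :=
  q1 ^ Eb B d c * (∏ p ∈ c.support, qpd (d p.1) (c p))⁻¹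

lemma q1_ne_zero : (q1 : Kq) ≠ 0 := RatFunc.X_ne_zero

lemma fconf_shift {B : Matrix (Fin l) (Fin l) ℤ} {d : Fin l → ℕ}
    (hsym : B.IsSymm) (hdiag : ∀ i, B i i = 2 * d i) (c : (Fin l × ℕ) →₀ ℕ) :
    fconf B d c = q1 ^ Wb B d (fun i => rowSum (shf c) i)
      * (∏ i, qpd (d i) (c (i, 0)))⁻¹ * fconf B d (shf c) := by
  rw [fconf, fconf, Eb_shift hsym hdiag, zpow_add₀ q1_ne_zero, prod_qpd_shift d c, mul_inv]
  ring

def Tfin {l : ℕ} (m : Fin l → ℕ) (k : Fin l →₀ ℕ) : Finset ((Fin l × ℕ) →₀ ℕ) :=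
  (T_finite m k).toFinset

lemma Jser_eq_sum (B : Matrix (Fin l) (Fin l) ℤ) (d : Fin l → ℕ) (m : Fin l → ℕ)
    (k : Fin l →₀ ℕ) :
    Jser B d m k = ∑ c ∈ Tfin m k, fconf B d c := by
  rw [Jser, Tfin]
  exact finsum_mem_eq_finite_toFinset_sum _ (T_finite m k)

lemma mem_Tfin {m : Fin l → ℕ} {k : Fin l →₀ ℕ} {c : (Fin l × ℕ) →₀ ℕ} :
    c ∈ Tfin m k ↔ (∀ i, rowSum c i = m i) ∧ (∀ i, degSum c i = k i) := by
  rw [Tfin, Set.Finite.mem_toFinset, Set.mem_setOf_eq]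

lemma main_coeff {B : Matrix (Fin l) (Fin l) ℤ} {d : Fin l → ℕ}
    (hsym : B.IsSymm) (hdiag : ∀ i, B i i = 2 * d i) (m : Fin l → ℕ) (k : Fin l →₀ ℕ) :
    ∑ c ∈ Tfin m k, fconf B d c
      = ∑ a ∈ Finset.Iic m,
          if Finsupp.equivFunOnFinite.symm a ≤ k then
            (q1 ^ Wb B d a * (∏ i, qpd (d i) (m i - a i))⁻¹)
              * ∑ c' ∈ Tfin a (k - Finsupp.equivFunOnFinite.symm a), fconf B d c'
          else 0 := by
  classical
  rw [← Finset.sum_fiberwise_of_maps_to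
    (g := fun c => (fun i => rowSum (shf c) i : Fin l → ℕ)) (t := Finset.Iic m)
    (fun c hc => ?_) (fconf B d)]
  swap
  · -- maps to Iic m
    rw [Finset.mem_Iic]
    obtain ⟨hrow, _⟩ := mem_Tfin.mp hc
    intro i
    show rowSum (shf c) i ≤ m i
    have h1 := rowSum_shf_add c i
    have h2 := hrow i
    omega
  refine Finset.sum_congr rfl fun a ha => ?_
  rw [Finset.mem_Iic] at ha
  by_cases hak : Finsupp.equivFunOnFinite.symm a ≤ k
  · rw [if_pos hak]
    have hak' : ∀ i, a i ≤ k i := by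
      intro i
      have := hak i
      simpa using this
    rw [Finset.mul_sum]
    refine Finset.sum_nbij' shf (unshf (fun i => m i - a i)) ?_ ?_ ?_ ?_ ?_
    · -- shf maps filter into Tfin a (k - â)
      intro c hc
      rw [Finset.mem_filter] at hc
      obtain ⟨hcT, hfib⟩ := hc
      obtain ⟨hrow, hdeg⟩ := mem_Tfin.mp hcT
      rw [mem_Tfin]
      constructor
      · intro i; exact congrFun hfib i
      · intro i
        have h1 := degSum_shf_add c i
        have h2 : rowSum (shf c) i = a i := congrFun hfib i
        rw [Finsupp.tsub_apply]
        have h3 : (Finsupp.equivFunOnFinite.symm a) i = a i := rfl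
        rw [h3]
        have := hdeg i
        omega
    · -- unshf maps back
      intro c' hc'
      obtain ⟨hrow, hdeg⟩ := mem_Tfin.mp hc'
      rw [Finset.mem_filter, mem_Tfin]
      have hsu : shf (unshf (fun i => m i - a i) c') = c' := shf_unshf _ _
      refine ⟨⟨?_, ?_⟩, ?_⟩
      · intro i
        have h1 := rowSum_shf_add (unshf (fun i => m i - a i) c') i
        rw [hsu, unshf_apply_zero] at h1
        have h4 := hrow i
        have h5 : a i ≤ m i := ha i
        show rowSum (unshf (fun i => m i - a i) c') i = m i
        omega
      · intro i
        have h1 := degSum_shf_add (unshf (fun i => m i - a i) c') i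
        rw [hsu] at h1
        have h2 := hdeg i
        rw [Finsupp.tsub_apply] at h2
        have h3 : (Finsupp.equivFunOnFinite.symm a) i = a i := rfl
        rw [h3] at h2
        have h4 := hrow i
        have h5 := hak' i
        omega
      · funext i
        rw [hsu]
        exact hrow i
    · intro c hc
      rw [Finset.mem_filter] at hc
      obtain ⟨hcT, hfib⟩ := hc
      obtain ⟨hrow, _⟩ := mem_Tfin.mp hcT
      have hc0 : (fun i => c (i, 0)) = fun i => m i - a i := by
        funext i
        have h1 := rowSum_shf_add c i
        have h2 : rowSum (shf c) i = a i := congrFun hfib i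
        have h4 := hrow i
        omega
      calc unshf (fun i => m i - a i) (shf c)
          = unshf (fun i => c (i, 0)) (shf c) := by rw [hc0]
        _ = c := unshf_shf c
    · intro c' _
      exact shf_unshf _ _
    · -- values
      intro c hc
      rw [Finset.mem_filter] at hc
      obtain ⟨hcT, hfib⟩ := hc
      obtain ⟨hrow, _⟩ := mem_Tfin.mp hcT
      rw [fconf_shift hsym hdiag c, hfib]
      have hc0 : ∀ i, c (i, 0) = m i - a i := by
        intro i
        have h1 := rowSum_shf_add c i
        have h2 : rowSum (shf c) i = a i := congrFun hfib i
        have h4 := hrow i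
        omega
      simp_rw [hc0]
  · rw [if_neg hak]
    have : Finset.filter (fun c => (fun i => rowSum (shf c) i) = a) (Tfin m k) = ∅ := by
      rw [Finset.filter_eq_empty_iff]
      intro c hc
      obtain ⟨hrow, hdeg⟩ := mem_Tfin.mp hc
      intro hfib
      apply hak
      intro i
      have h1 := degSum_shf_add c i
      have h2 : rowSum (shf c) i = a i := congrFun hfib i
      have h3 : (Finsupp.equivFunOnFinite.symm a) i = a i := rfl
      have h4 := hdeg i
      simp only [h3]
      omega
    rw [this, Finset.sum_empty]


lemma rowSum_zero (i : Fin l) : rowSum (0 : (Fin l × ℕ) →₀ ℕ) i = 0 := by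
  simp [rowSum]

lemma degSum_zero (i : Fin l) : degSum (0 : (Fin l × ℕ) →₀ ℕ) i = 0 := by
  simp [degSum]

lemma eq_zero_of_rowSum_zero {c : (Fin l × ℕ) →₀ ℕ} (h : ∀ i, rowSum c i = 0) : c = 0 := by
  ext p
  obtain ⟨i, t⟩ := p
  have := le_rowSum c i t
  rw [h i] at this
  simpa using this

lemma Jser_zero (B : Matrix (Fin l) (Fin l) ℤ) (d : Fin l → ℕ) :
    Jser B d (0 : Fin l → ℕ) = 1 := by
  apply MvPowerSeries.ext
  intro k
  rw [MvPowerSeries.coeff_apply, Jser_eq_sum, MvPowerSeries.coeff_one]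
  by_cases hk : k = 0
  · subst hk
    have hT : Tfin (0 : Fin l → ℕ) (0 : Fin l →₀ ℕ) = {0} := by
      ext c
      rw [mem_Tfin, Finset.mem_singleton]
      constructor
      · rintro ⟨hrow, _⟩
        exact eq_zero_of_rowSum_zero fun i => by simpa using hrow i
      · rintro rfl
        exact ⟨fun i => by simp [rowSum_zero], fun i => by simp [degSum_zero]⟩
    rw [hT, if_pos rfl, Finset.sum_singleton, fconf]
    simp [Eb]
  · rw [if_neg hk]
    have hT : Tfin (0 : Fin l → ℕ) k = ∅ := by
      rw [Finset.eq_empty_iff_forall_notMem]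
      intro c hc
      obtain ⟨hrow, hdeg⟩ := mem_Tfin.mp hc
      have hc0 : c = 0 := eq_zero_of_rowSum_zero fun i => by simpa using hrow i
      apply hk
      ext i
      rw [← hdeg i, hc0, degSum_zero, Finsupp.coe_zero, Pi.zero_apply]
    rw [hT, Finset.sum_empty]

end Aux

open Aux in
theorem stmt_1 (l : ℕ) (hl : 1 ≤ l) (B : Matrix (Fin l) (Fin l) ℤ)
    (d : Fin l → ℕ) (hsym : B.IsSymm) (hdpos : ∀ i, 0 < d i)
    (hdiag : ∀ i, B i i = 2 * d i) (hoff : ∀ i j, i ≠ j → B i j ≤ 0)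
    (hdvd : ∀ i j, (d i : ℤ) ∣ B i j)
    (hposdef : ∀ x : Fin l → ℤ, x ≠ 0 → 0 < ∑ i, ∑ j, B i j * x i * x j) :
    (∀ m : Fin l → ℕ, Jser B d m =
      ∑ a ∈ Finset.Iic m,
        (MvPowerSeries.monomial (Finsupp.equivFunOnFinite.symm a)
          (q1 ^ Wb B d a * (∏ i, qpd (d i) (m i - a i))⁻¹)) * Jser B d a)
    ∧ (∀ Jtld : (Fin l → ℕ) → MvPowerSeries (Fin l) Kq, Jtld 0 = 1 →
        (∀ m : Fin l → ℕ, Jtld m =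
          ∑ a ∈ Finset.Iic m,
            (MvPowerSeries.monomial (Finsupp.equivFunOnFinite.symm a)
              (q1 ^ Wb B d a * (∏ i, qpd (d i) (m i - a i))⁻¹)) * Jtld a) →
        Jtld = Jser B d) := by
  classical
  have hpart1 : ∀ m : Fin l → ℕ, Jser B d m =
      ∑ a ∈ Finset.Iic m,
        (MvPowerSeries.monomial (Finsupp.equivFunOnFinite.symm a)
          (q1 ^ Wb B d a * (∏ i, qpd (d i) (m i - a i))⁻¹)) * Jser B d a := by
    intro m
    apply MvPowerSeries.ext
    intro k
    rw [map_sum]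
    have hL : MvPowerSeries.coeff k (Jser B d m)
        = ∑ a ∈ Finset.Iic m,
            if Finsupp.equivFunOnFinite.symm a ≤ k then
              (q1 ^ Wb B d a * (∏ i, qpd (d i) (m i - a i))⁻¹)
                * ∑ c' ∈ Tfin a (k - Finsupp.equivFunOnFinite.symm a), fconf B d c'
            else 0 := by
      rw [MvPowerSeries.coeff_apply, Jser_eq_sum, main_coeff hsym hdiag]
    rw [hL]
    refine Finset.sum_congr rfl fun a _ => ?_
    rw [MvPowerSeries.coeff_monomial_mul]
    by_cases hak : Finsupp.equivFunOnFinite.symm a ≤ k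
    · rw [if_pos hak, if_pos hak, MvPowerSeries.coeff_apply, Jser_eq_sum]
    · rw [if_neg hak, if_neg hak]
  refine ⟨hpart1, ?_⟩
  intro Jtld hJ0 hrec
  funext m
  suffices h : ∀ n, ∀ m : Fin l → ℕ, (∑ i, m i) = n → Jtld m = Jser B d m from h _ m rfl
  intro n
  induction n using Nat.strong_induction_on with
  | _ n ih =>
    intro m hm
    by_cases h0 : m = 0
    · subst h0
      rw [hJ0, Jser_zero]
    · set C : MvPowerSeries (Fin l) Kq :=
        MvPowerSeries.monomial (Finsupp.equivFunOnFinite.symm m)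
          (q1 ^ Wb B d m * (∏ i, qpd (d i) (m i - m i))⁻¹) with hCdef
      have hD : Jtld m - Jser B d m = C * (Jtld m - Jser B d m) := by
        conv_lhs => rw [hrec m, hpart1 m]
        rw [← Finset.sum_sub_distrib]
        rw [Finset.sum_eq_single m]
        · rw [← mul_sub]
        · intro a haIic hne
          have hlt : (∑ i, a i) < n := by
            rw [← hm]
            apply Finset.sum_lt_sum
            · intro i _
              exact Finset.mem_Iic.mp haIic i
            · by_contra hc
              push_neg at hc
              apply hne
              funext i
              exact le_antisymm (Finset.mem_Iic.mp haIic i) (hc i (Finset.mem_univ i))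
          rw [ih _ hlt a rfl, sub_self]
        · intro hmem
          exact absurd (Finset.mem_Iic.mpr le_rfl) hmem
      have hunit : IsUnit (1 - C) := by
        rw [MvPowerSeries.isUnit_iff_constantCoeff]
        have hm0 : Finsupp.equivFunOnFinite.symm m ≠ 0 := by
          intro hc
          apply h0
          have := congrArg (Finsupp.equivFunOnFinite) hc
          exact (by simpa using this : m = Finsupp.equivFunOnFinite 0).trans rfl
        have : MvPowerSeries.constantCoeff C = 0 := by
          rw [← MvPowerSeries.coeff_zero_eq_constantCoeff_apply, hCdef,
            MvPowerSeries.coeff_monomial, if_neg (by exact fun hc => hm0 hc.symm)]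
        rw [map_sub, map_one, this, sub_zero]
        exact isUnit_one
      obtain ⟨u, hu⟩ := hunit
      have h1 : (u : MvPowerSeries (Fin l) Kq) * (Jtld m - Jser B d m) = 0 := by
        rw [hu, sub_mul, one_mul, ← hD, sub_self]
      have h2 : Jtld m - Jser B d m = 0 := by
        have := congrArg (fun z => ((u⁻¹ : (MvPowerSeries (Fin l) Kq)ˣ) : MvPowerSeries (Fin l) Kq) * z) h1
        simpa [← mul_assoc] using this
      exact sub_eq_zero.mp h2

end
end

section
/- For all integers r ≤ u < s and every m ∈ ℕ^l, the finite-interval fermionic sums satisfy the splitting relation J_m[r,s](q,z) = ∑_{a+b=m} J_a[r,u](q, z·q^{Bb}) · J_b[u+1,s](q, z), where the sum is over all pairs a, b ∈ ℕ^l with a + b = m, and z·q^{Bb} denotes the substitution z_i ↦ z_i q^{(Bb)_i} with (Bb)_i = ∑_j B_{ij} b_j. -/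
/- STATEMENT 2: splitting relation for finite-interval fermionic sums:
   for integers r ≤ u < s and m ∈ ℕ^l,
     J_m[r,s](q,z) = ∑_{a+b=m} J_a[r,u](q, z·q^{Bb}) · J_b[u+1,s](q,z),
   in the field ℚ(q,z_1,…,z_l) (which contains the Laurent polynomial ring
   ℚ(q)[z_1^{±1},…,z_l^{±1}]). -/

noncomputable section

open scoped BigOperators

/-- The field ℚ(q, z_1, …, z_l). -/
abbrev F2 (l : ℕ) : Type := FractionRing (MvPolynomial (Fin (l + 1)) ℚ)

/-- the variable q -/
def q2 (l : ℕ) : F2 l :=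
  algebraMap (MvPolynomial (Fin (l + 1)) ℚ) (F2 l) (MvPolynomial.X 0)

/-- the variables z_i -/
def z2 (l : ℕ) (i : Fin l) : F2 l :=
  algebraMap (MvPolynomial (Fin (l + 1)) ℚ) (F2 l) (MvPolynomial.X i.succ)

/-- `(Q;Q)_n = ∏_{k=1}^n (1 − Q^k)` -/
def pochQ {F : Type} [Field F] (Q : F) (n : ℕ) : F :=
  ∏ k ∈ Finset.range n, (1 - Q ^ (k + 1))

/-- `(Bb)_i = ∑_j B_{ij} b_j` -/
def Bv {l : ℕ} (B : Matrix (Fin l) (Fin l) ℤ) (b : Fin l → ℕ) (i : Fin l) : ℤ :=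
  ∑ j, B i j * b j

/-- The exponent
`E = (1/2)∑_{t,t'=r}^s min(t,t') ∑_{i,j} B_{ij} n_i^{(t)} n_j^{(t')}
     − ∑_{t=r}^s t ∑_i d_i n_i^{(t)}`, where `t = r + j`; the double sum is
even (as B_{ii} = 2d_i), so integer division by 2 is exact. -/
def Eint {l : ℕ} (B : Matrix (Fin l) (Fin l) ℤ) (d : Fin l → ℕ) (r : ℤ)
    {N : ℕ} (n : Fin N → Fin l → ℕ) : ℤ :=
  (∑ j, ∑ j', min (r + (j.1 : ℤ)) (r + (j'.1 : ℤ)) *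
      ∑ i, ∑ i', B i i' * n j i * n j' i') / 2
  - ∑ j, (r + (j.1 : ℤ)) * ∑ i, (d i : ℤ) * n j i

/-- The finite-interval fermionic sum `J_m[r,s](q,z)` (for `r ≤ s`): the sum
over tuples `(n^{(t)})_{t=r}^s` in ℕ^l with `∑_t n^{(t)} = m` of
`q^E (∏_i z_i^{∑_t t n_i^{(t)}}) / ∏_{t,i} (q_i;q_i)_{n_i^{(t)}}`. -/
def Jint {l : ℕ} (B : Matrix (Fin l) (Fin l) ℤ) (d : Fin l → ℕ)
    {F : Type} [Field F] (q : F) (z : Fin l → F) (r s : ℤ) (m : Fin l → ℕ) : F :=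
  ∑ n ∈ Finset.filter
      (fun n : Fin ((s - r).toNat + 1) → Fin l → ℕ => (∑ j, n j) = m)
      (Fintype.piFinset fun _ : Fin ((s - r).toNat + 1) =>
        Fintype.piFinset fun i => Finset.Iic (m i)),
    q ^ (Eint B d r n) *
      (∏ i, z i ^ (∑ j, (r + (j.1 : ℤ)) * n j i)) *
      (∏ j, ∏ i, pochQ (q ^ d i) (n j i))⁻¹

/- ===== helpers ===== -/

lemma even_double_sum {α : Type*} [Fintype α] [DecidableEq α] (a : α → α → ℤ)
    (hsym : ∀ i j, a i j = a j i) (hdiag : ∀ i, (2:ℤ) ∣ a i i) :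
    (2:ℤ) ∣ ∑ i, ∑ j, a i j := by
  have h : ((∑ i, ∑ j, a i j : ℤ) : ZMod 2) = 0 := by
    push_cast
    rw [← Finset.sum_product' Finset.univ Finset.univ (fun i j => ((a i j : ℤ) : ZMod 2))]
    rw [← Finset.diag_union_offDiag (Finset.univ : Finset α),
      Finset.sum_union (Finset.disjoint_diag_offDiag _)]
    have h1 : ∑ p ∈ (Finset.univ : Finset α).diag, ((a p.1 p.2 : ℤ) : ZMod 2) = 0 := by
      rw [Finset.sum_diag]
      refine Finset.sum_eq_zero fun i _ => ?_
      obtain ⟨k, hk⟩ := hdiag i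
      rw [hk]; push_cast
      exact mul_eq_zero_of_left (by decide) _
    have h2 : ∑ p ∈ (Finset.univ : Finset α).offDiag, ((a p.1 p.2 : ℤ) : ZMod 2) = 0 := by
      refine Finset.sum_involution (fun p _ => p.swap) ?_ ?_ ?_ ?_
      · intro p _
        rw [Prod.snd_swap, Prod.fst_swap, hsym p.1 p.2]
        exact CharTwo.add_self_eq_zero _
      · intro p hp _
        rw [Finset.mem_offDiag] at hp
        intro hc
        exact hp.2.2 (congrArg Prod.snd hc ▸ rfl)
      · intro p hp
        rw [Finset.mem_offDiag] at hp ⊢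
        exact ⟨Finset.mem_univ _, Finset.mem_univ _, fun hc => hp.2.2 hc.symm⟩
      · intro p _; exact Prod.swap_swap p
    rw [h1, h2, add_zero]
  exact_mod_cast (ZMod.intCast_zmod_eq_zero_iff_dvd _ 2).mp h

def cA {N1 N2 N : ℕ} (hN : N = N1 + N2) (j : Fin N1) : Fin N :=
  Fin.cast hN.symm (Fin.castAdd N2 j)
def eA {N1 N2 N : ℕ} (hN : N = N1 + N2) (j : Fin N2) : Fin N :=
  Fin.cast hN.symm (Fin.natAdd N1 j)

@[simp] lemma cA_val {N1 N2 N : ℕ} (hN : N = N1 + N2) (j : Fin N1) : (cA hN j).1 = j.1 := rfl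
@[simp] lemma eA_val {N1 N2 N : ℕ} (hN : N = N1 + N2) (j : Fin N2) : (eA hN j).1 = N1 + j.1 := rfl

@[simp] lemma append_cA {α : Sort*} {N1 N2 N : ℕ} (hN : N = N1 + N2)
    (n1 : Fin N1 → α) (n2 : Fin N2 → α) (j : Fin N1) :
    Fin.append n1 n2 (Fin.cast hN (cA hN j)) = n1 j := Fin.append_left n1 n2 j

@[simp] lemma append_eA {α : Sort*} {N1 N2 N : ℕ} (hN : N = N1 + N2)
    (n1 : Fin N1 → α) (n2 : Fin N2 → α) (j : Fin N2) :
    Fin.append n1 n2 (Fin.cast hN (eA hN j)) = n2 j := Fin.append_right n1 n2 j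

lemma glue_sum {M : Type*} [AddCommMonoid M] {N1 N2 N : ℕ} (hN : N = N1 + N2)
    (f : Fin N → M) :
    ∑ j, f j = ∑ j : Fin N1, f (cA hN j) + ∑ j : Fin N2, f (eA hN j) := by
  rw [Fintype.sum_equiv (finCongr hN) f (fun j => f (Fin.cast hN.symm j)) (fun j => rfl)]
  exact Fin.sum_univ_add _

lemma glue_prod {M : Type*} [CommMonoid M] {N1 N2 N : ℕ} (hN : N = N1 + N2)
    (f : Fin N → M) :
    ∏ j, f j = (∏ j : Fin N1, f (cA hN j)) * ∏ j : Fin N2, f (eA hN j) := by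
  rw [Fintype.prod_equiv (finCongr hN) f (fun j => f (Fin.cast hN.symm j)) (fun j => rfl)]
  exact Fin.prod_univ_add _

lemma double_glue {M : Type*} [AddCommMonoid M] {N1 N2 N : ℕ} (hN : N = N1 + N2)
    (F : Fin N → Fin N → M) :
    ∑ j, ∑ j', F j j'
      = ((∑ j : Fin N1, ∑ j' : Fin N1, F (cA hN j) (cA hN j'))
        + ∑ j : Fin N1, ∑ j' : Fin N2, F (cA hN j) (eA hN j'))
        + ((∑ j : Fin N2, ∑ j' : Fin N1, F (eA hN j) (cA hN j'))
        + ∑ j : Fin N2, ∑ j' : Fin N2, F (eA hN j) (eA hN j')) := by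
  rw [glue_sum hN (fun j => ∑ j', F j j'),
    Finset.sum_congr rfl (fun j _ => glue_sum hN (fun j' => F (cA hN j) j')),
    Finset.sum_congr rfl (fun j _ => glue_sum hN (fun j' => F (eA hN j) j')),
    Finset.sum_add_distrib, Finset.sum_add_distrib]

lemma zpow_sum' {G₀ : Type*} [CommGroupWithZero G₀] (a : G₀) (ha : a ≠ 0)
    {ι : Type*} (s : Finset ι) (f : ι → ℤ) :
    a ^ (∑ i ∈ s, f i) = ∏ i ∈ s, a ^ f i := by
  classical
  induction s using Finset.induction with
  | empty => simp
  | insert _ _ h ih => rw [Finset.sum_insert h, Finset.prod_insert h, zpow_add₀ ha, ih]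

section EintGlue
variable {l : ℕ} (B : Matrix (Fin l) (Fin l) ℤ)

lemma Tsymm (hsym : B.IsSymm) (x y : Fin l → ℕ) :
    (∑ i, ∑ i', B i i' * (x i : ℤ) * (y i' : ℤ))
      = ∑ i, ∑ i', B i i' * (y i : ℤ) * (x i' : ℤ) := by
  rw [Finset.sum_comm]
  refine Finset.sum_congr rfl fun i _ => Finset.sum_congr rfl fun i' _ => ?_
  rw [hsym.apply i i']
  ring

lemma Teven (hsym : B.IsSymm) {d : Fin l → ℕ} (hdiag : ∀ i, B i i = 2 * (d i : ℤ))
    (x : Fin l → ℕ) : (2:ℤ) ∣ ∑ i, ∑ i', B i i' * (x i : ℤ) * (x i' : ℤ) := by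
  refine even_double_sum _ (fun i j => ?_) (fun i => ?_)
  · rw [hsym.apply i j]; ring
  · exact ⟨(d i) * x i * x i, by rw [hdiag i]; ring⟩

lemma cross_sum {N1 N2 : ℕ} (r : ℤ) (n1 : Fin N1 → Fin l → ℕ)
    (n2 : Fin N2 → Fin l → ℕ) (b : Fin l → ℕ)
    (hb : ∀ i, (b i : ℤ) = ∑ j, (n2 j i : ℤ)) :
    ∑ j : Fin N1, ∑ j' : Fin N2,
        (r + (j.1:ℤ)) * ∑ i, ∑ i', B i i' * (n1 j i : ℤ) * (n2 j' i' : ℤ)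
      = ∑ i, Bv B b i * ∑ j : Fin N1, (r + (j.1:ℤ)) * (n1 j i : ℤ) := by
  have h1 : ∀ x : Fin l → ℕ,
      (∑ j' : Fin N2, ∑ i, ∑ i', B i i' * (x i : ℤ) * (n2 j' i' : ℤ))
        = ∑ i, (x i : ℤ) * Bv B b i := by
    intro x
    rw [Finset.sum_comm]
    refine Finset.sum_congr rfl fun i _ => ?_
    rw [Finset.sum_comm, Bv, Finset.mul_sum]
    refine Finset.sum_congr rfl fun i' _ => ?_
    rw [← Finset.mul_sum, ← hb i']
    ring
  calc ∑ j : Fin N1, ∑ j' : Fin N2,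
        (r + (j.1:ℤ)) * ∑ i, ∑ i', B i i' * (n1 j i : ℤ) * (n2 j' i' : ℤ)
      = ∑ j : Fin N1, (r + (j.1:ℤ)) * ∑ i, (n1 j i : ℤ) * Bv B b i := by
        refine Finset.sum_congr rfl fun j _ => ?_
        rw [← Finset.mul_sum, h1 (n1 j)]
    _ = ∑ i, Bv B b i * ∑ j : Fin N1, (r + (j.1:ℤ)) * (n1 j i : ℤ) := by
        simp_rw [Finset.mul_sum]
        rw [Finset.sum_comm]
        exact Finset.sum_congr rfl fun i _ => Finset.sum_congr rfl fun j _ => by ring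

lemma Eint_glue (d : Fin l → ℕ)
    (hsym : B.IsSymm) (hdiag : ∀ i, B i i = 2 * (d i : ℤ))
    {N1 N2 N : ℕ} (hN : N = N1 + N2) (r : ℤ)
    (n1 : Fin N1 → Fin l → ℕ) (n2 : Fin N2 → Fin l → ℕ) (b : Fin l → ℕ)
    (hb : ∀ i, (b i : ℤ) = ∑ j, (n2 j i : ℤ)) :
    Eint B d r (fun j => Fin.append n1 n2 (Fin.cast hN j))
      = Eint B d r n1 + Eint B d (r + (N1:ℤ)) n2
        + ∑ i, Bv B b i * ∑ j : Fin N1, (r + (j.1:ℤ)) * (n1 j i : ℤ) := by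
  set C := ∑ i, Bv B b i * ∑ j : Fin N1, (r + (j.1:ℤ)) * (n1 j i : ℤ) with hC
  set Q1 := ∑ j : Fin N1, ∑ j', min (r + (j.1 : ℤ)) (r + (j'.1 : ℤ)) *
      ∑ i, ∑ i', B i i' * (n1 j i : ℤ) * (n1 j' i' : ℤ) with hQ1
  set Q2 := ∑ j : Fin N2, ∑ j', min (r + (N1:ℤ) + (j.1 : ℤ)) (r + (N1:ℤ) + (j'.1 : ℤ)) *
      ∑ i, ∑ i', B i i' * (n2 j i : ℤ) * (n2 j' i' : ℤ) with hQ2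
  have hQ : (∑ j : Fin N, ∑ j', min (r + (j.1 : ℤ)) (r + (j'.1 : ℤ)) *
      ∑ i, ∑ i', B i i' * ((Fin.append n1 n2 (Fin.cast hN j)) i : ℤ) *
        ((Fin.append n1 n2 (Fin.cast hN j')) i' : ℤ)) = Q1 + Q2 + 2 * C := by
    rw [double_glue hN]
    have h11 : (∑ j : Fin N1, ∑ j' : Fin N1,
        min (r + ((cA hN j).1 : ℤ)) (r + ((cA hN j').1 : ℤ)) *
        ∑ i, ∑ i', B i i' * ((Fin.append n1 n2 (Fin.cast hN (cA hN j))) i : ℤ) *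
          ((Fin.append n1 n2 (Fin.cast hN (cA hN j'))) i' : ℤ)) = Q1 := by
      simp only [cA_val, append_cA]
      rfl
    have h12 : (∑ j : Fin N1, ∑ j' : Fin N2,
        min (r + ((cA hN j).1 : ℤ)) (r + ((eA hN j').1 : ℤ)) *
        ∑ i, ∑ i', B i i' * ((Fin.append n1 n2 (Fin.cast hN (cA hN j))) i : ℤ) *
          ((Fin.append n1 n2 (Fin.cast hN (eA hN j'))) i' : ℤ)) = C := by
      simp only [cA_val, eA_val, append_cA, append_eA]
      rw [hC, ← cross_sum B r n1 n2 b hb]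
      refine Finset.sum_congr rfl fun j _ => Finset.sum_congr rfl fun j' _ => ?_
      congr 1
      have := j.isLt
      push_cast
      omega
    have h21 : (∑ j : Fin N2, ∑ j' : Fin N1,
        min (r + ((eA hN j).1 : ℤ)) (r + ((cA hN j').1 : ℤ)) *
        ∑ i, ∑ i', B i i' * ((Fin.append n1 n2 (Fin.cast hN (eA hN j))) i : ℤ) *
          ((Fin.append n1 n2 (Fin.cast hN (cA hN j'))) i' : ℤ)) = C := by
      simp only [cA_val, eA_val, append_cA, append_eA]
      rw [Finset.sum_comm, hC, ← cross_sum B r n1 n2 b hb]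
      refine Finset.sum_congr rfl fun j' _ => Finset.sum_congr rfl fun j _ => ?_
      rw [Tsymm B hsym (n2 j) (n1 j')]
      congr 1
      have := j'.isLt
      push_cast
      omega
    have h22 : (∑ j : Fin N2, ∑ j' : Fin N2,
        min (r + ((eA hN j).1 : ℤ)) (r + ((eA hN j').1 : ℤ)) *
        ∑ i, ∑ i', B i i' * ((Fin.append n1 n2 (Fin.cast hN (eA hN j))) i : ℤ) *
          ((Fin.append n1 n2 (Fin.cast hN (eA hN j'))) i' : ℤ)) = Q2 := by
      simp only [eA_val, append_eA, hQ2]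
      refine Finset.sum_congr rfl fun j _ => Finset.sum_congr rfl fun j' _ => ?_
      congr 1
      push_cast
      omega
    rw [h11, h12, h21, h22]
    ring
  have hd1 : (2:ℤ) ∣ Q1 := by
    rw [hQ1]
    refine even_double_sum _ (fun j j' => ?_) (fun j => ?_)
    · rw [min_comm, Tsymm B hsym (n1 j) (n1 j')]
    · exact Dvd.dvd.mul_left (Teven B hsym hdiag (n1 j)) _
  have hd2 : (2:ℤ) ∣ Q2 := by
    rw [hQ2]
    refine even_double_sum _ (fun j j' => ?_) (fun j => ?_)
    · rw [min_comm, Tsymm B hsym (n2 j) (n2 j')]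
    · exact Dvd.dvd.mul_left (Teven B hsym hdiag (n2 j)) _
  have hL : (∑ j : Fin N, (r + (j.1 : ℤ)) *
        ∑ i, (d i : ℤ) * ((Fin.append n1 n2 (Fin.cast hN j)) i : ℤ))
      = (∑ j : Fin N1, (r + (j.1 : ℤ)) * ∑ i, (d i : ℤ) * (n1 j i : ℤ))
        + ∑ j : Fin N2, (r + (N1:ℤ) + (j.1 : ℤ)) * ∑ i, (d i : ℤ) * (n2 j i : ℤ) := by
    rw [glue_sum hN]
    congr 1
    · simp only [cA_val, append_cA]
    · simp only [eA_val, append_eA]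
      refine Finset.sum_congr rfl fun j _ => ?_
      congr 1
      push_cast
      ring
  simp only [Eint]
  rw [hQ, hL]
  obtain ⟨k1, hk1⟩ := hd1
  obtain ⟨k2, hk2⟩ := hd2
  rw [hk1, hk2]
  omega
end EintGlue

lemma mem_Jset {l : ℕ} {M : ℕ} (m : Fin l → ℕ) (n : Fin M → Fin l → ℕ) :
    (n ∈ Finset.filter (fun n : Fin M → Fin l → ℕ => (∑ j, n j) = m)
      (Fintype.piFinset fun _ : Fin M => Fintype.piFinset fun i => Finset.Iic (m i)))
      ↔ ∀ i, ∑ j, n j i = m i := by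
  rw [Finset.mem_filter]
  constructor
  · rintro ⟨-, h⟩ i
    rw [← congrFun h i, Finset.sum_apply]
  · intro h
    refine ⟨?_, ?_⟩
    · rw [Fintype.mem_piFinset]
      intro j
      rw [Fintype.mem_piFinset]
      intro i
      rw [Finset.mem_Iic]
      calc n j i ≤ ∑ j', n j' i :=
            Finset.single_le_sum (f := fun j' => n j' i) (fun _ _ => Nat.zero_le _)
              (Finset.mem_univ j)
        _ = m i := h i
    · funext i
      rw [Finset.sum_apply]
      exact h i

theorem stmt_2 (l : ℕ) (hl : 1 ≤ l) (B : Matrix (Fin l) (Fin l) ℤ)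
    (d : Fin l → ℕ) (hsym : B.IsSymm) (hdpos : ∀ i, 0 < d i)
    (hdiag : ∀ i, B i i = 2 * d i) (hoff : ∀ i j, i ≠ j → B i j ≤ 0)
    (hdvd : ∀ i j, (d i : ℤ) ∣ B i j)
    (hposdef : ∀ x : Fin l → ℤ, x ≠ 0 → 0 < ∑ i, ∑ j, B i j * x i * x j)
    (r u s : ℤ) (hru : r ≤ u) (hus : u < s) (m : Fin l → ℕ) :
    Jint B d (q2 l) (z2 l) r s m
    = ∑ b ∈ Finset.Iic m,
        Jint B d (q2 l) (fun i => z2 l i * q2 l ^ (Bv B b i)) r u (m - b) *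
        Jint B d (q2 l) (z2 l) (u + 1) s b := by
  classical
  have hq : q2 l ≠ 0 := by
    rw [q2, Ne, IsFractionRing.to_map_eq_zero_iff]
    exact MvPolynomial.X_ne_zero 0
  have hz : ∀ i, z2 l i ≠ 0 := fun i => by
    rw [z2, Ne, IsFractionRing.to_map_eq_zero_iff]
    exact MvPolynomial.X_ne_zero _
  have hN : (s - r).toNat + 1 = ((u - r).toNat + 1) + ((s - (u + 1)).toNat + 1) := by omega
  have hrN1 : r + ((((u - r).toNat + 1 : ℕ)) : ℤ) = u + 1 := by push_cast; omega
  simp only [Jint]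
  rw [Finset.sum_congr rfl (fun b _ => by
    rw [Finset.sum_mul_sum, ← Finset.sum_product'] :
      ∀ b ∈ Finset.Iic m, _ = _)]
  rw [Finset.sum_sigma']
  have hglue : ∀ (n : Fin ((s - r).toNat + 1) → Fin l → ℕ),
      (fun j => Fin.append (fun j => n (cA hN j)) (fun j => n (eA hN j)) (Fin.cast hN j)) = n := by
    intro n
    funext jj
    have key : ∀ x : Fin (((u - r).toNat + 1) + ((s - (u + 1)).toNat + 1)),
        Fin.append (fun j => n (cA hN j)) (fun j => n (eA hN j)) x
          = n (Fin.cast hN.symm x) := by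
      intro x
      refine Fin.addCases (motive := fun x =>
        Fin.append (fun j => n (cA hN j)) (fun j => n (eA hN j)) x
          = n (Fin.cast hN.symm x)) (fun j => ?_) (fun j => ?_) x
      · exact Fin.append_left _ _ j
      · exact Fin.append_right _ _ j
    exact key (Fin.cast hN jj)
  refine Finset.sum_bij'
    (fun n _ => (⟨fun i => ∑ j : Fin ((s - (u + 1)).toNat + 1), n (eA hN j) i,
      (fun j => n (cA hN j), fun j => n (eA hN j))⟩ :
      (_ : Fin l → ℕ) × ((Fin ((u - r).toNat + 1) → Fin l → ℕ) ×
        (Fin ((s - (u + 1)).toNat + 1) → Fin l → ℕ))))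
    (fun p _ => fun j => Fin.append p.2.1 p.2.2 (Fin.cast hN j))
    ?_ ?_ ?_ ?_ ?_
  · -- hi : forward membership
    intro n hn
    replace hn := (mem_Jset m n).mp hn
    have hdec : ∀ i, (∑ j : Fin ((u - r).toNat + 1), n (cA hN j) i)
        + (∑ j : Fin ((s - (u + 1)).toNat + 1), n (eA hN j) i) = m i := by
      intro i
      rw [← glue_sum hN (fun j => n j i)]
      exact hn i
    rw [Finset.mem_sigma, Finset.mem_product]
    refine ⟨?_, ?_, ?_⟩
    · rw [Finset.mem_Iic, Pi.le_def]
      intro i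
      show (∑ j : Fin ((s - (u + 1)).toNat + 1), n (eA hN j) i) ≤ m i
      have := hdec i
      omega
    · refine (mem_Jset _ _).mpr ?_
      intro i
      show ∑ j : Fin ((u - r).toNat + 1), n (cA hN j) i
        = m i - ∑ j : Fin ((s - (u + 1)).toNat + 1), n (eA hN j) i
      have := hdec i
      omega
    · refine (mem_Jset _ _).mpr ?_
      intro i
      rfl
  · -- hj : backward membership
    rintro ⟨b, n1, n2⟩ hp
    rw [Finset.mem_sigma, Finset.mem_product] at hp
    obtain ⟨hb, h1, h2⟩ := hp
    rw [Finset.mem_Iic, Pi.le_def] at hb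
    replace h1 := (mem_Jset _ _).mp h1
    replace h2 := (mem_Jset _ _).mp h2
    refine (mem_Jset _ _).mpr ?_
    intro i
    dsimp only
    rw [glue_sum hN (fun j => Fin.append n1 n2 (Fin.cast hN j) i)]
    simp only [append_cA, append_eA]
    rw [h1 i, h2 i, Pi.sub_apply]
    have := hb i
    omega
  · -- left_inv
    intro n _
    dsimp only
    exact hglue n
  · -- right_inv
    rintro ⟨b, n1, n2⟩ hp
    rw [Finset.mem_sigma, Finset.mem_product] at hp
    obtain ⟨hb, h1, h2⟩ := hp
    replace h2 := (mem_Jset _ _).mp h2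
    dsimp only
    have hb' : (fun i => ∑ j : Fin ((s - (u + 1)).toNat + 1),
        Fin.append n1 n2 (Fin.cast hN (eA hN j)) i) = b := by
      funext i
      simp only [append_eA]
      exact h2 i
    have hn1 : (fun j => Fin.append n1 n2 (Fin.cast hN (cA hN j))) = n1 := by
      funext j
      rw [append_cA]
    have hn2 : (fun j => Fin.append n1 n2 (Fin.cast hN (eA hN j))) = n2 := by
      funext j
      rw [append_eA]
    simp only [hb', hn1, hn2]
  · -- term equality
    intro n hn
    replace hn := (mem_Jset m n).mp hn
    dsimp only
    have hbZ : ∀ i, ((∑ j : Fin ((s - (u + 1)).toNat + 1), n (eA hN j) i : ℕ) : ℤ)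
        = ∑ j : Fin ((s - (u + 1)).toNat + 1), (n (eA hN j) i : ℤ) := by
      intro i
      push_cast
      rfl
    have hE := Eint_glue B d hsym hdiag hN r (fun j => n (cA hN j)) (fun j => n (eA hN j))
      (fun i => ∑ j : Fin ((s - (u + 1)).toNat + 1), n (eA hN j) i) hbZ
    rw [hrN1, hglue n] at hE
    have hzexp : ∀ i, (∑ j : Fin ((s - r).toNat + 1), (r + (j.1 : ℤ)) * (n j i : ℤ))
        = (∑ j : Fin ((u - r).toNat + 1), (r + (j.1 : ℤ)) * (n (cA hN j) i : ℤ))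
          + ∑ j : Fin ((s - (u + 1)).toNat + 1), (u + 1 + (j.1 : ℤ)) * (n (eA hN j) i : ℤ) := by
      intro i
      rw [glue_sum hN (fun j => (r + (j.1 : ℤ)) * (n j i : ℤ))]
      refine congrArg₂ (· + ·) rfl ?_
      refine Finset.sum_congr rfl fun j _ => ?_
      show (r + ((eA hN j).1 : ℤ)) * (n (eA hN j) i : ℤ) = _
      have h4 : (eA hN j).1 = ((u - r).toNat + 1) + j.1 := eA_val hN j
      have h3 : (r + ((eA hN j).1 : ℤ)) = u + 1 + (j.1 : ℤ) := by omega
      rw [h3]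
    have hpoch : (∏ j : Fin ((s - r).toNat + 1), ∏ i, pochQ (q2 l ^ d i) (n j i))
        = (∏ j : Fin ((u - r).toNat + 1), ∏ i, pochQ (q2 l ^ d i) (n (cA hN j) i)) *
          ∏ j : Fin ((s - (u + 1)).toNat + 1), ∏ i, pochQ (q2 l ^ d i) (n (eA hN j) i) := by
      rw [glue_prod hN (fun j => ∏ i, pochQ (q2 l ^ d i) (n j i))]
    have hzprod : (∏ i, z2 l i ^ (∑ j : Fin ((s - r).toNat + 1), (r + (j.1 : ℤ)) * (n j i : ℤ)))
        = ∏ i, (z2 l i ^ (∑ j : Fin ((u - r).toNat + 1), (r + (j.1 : ℤ)) * (n (cA hN j) i : ℤ)))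
            * z2 l i ^ (∑ j : Fin ((s - (u + 1)).toNat + 1), (u + 1 + (j.1 : ℤ)) * (n (eA hN j) i : ℤ)) :=
      Finset.prod_congr rfl fun i _ => by rw [hzexp i, zpow_add₀ (hz i)]
    have hmid : (∏ i, (z2 l i * q2 l ^ Bv B (fun i => ∑ j : Fin ((s - (u + 1)).toNat + 1), n (eA hN j) i) i) ^
          (∑ j : Fin ((u - r).toNat + 1), (r + (j.1 : ℤ)) * (n (cA hN j) i : ℤ)))
        = (∏ i, z2 l i ^ (∑ j : Fin ((u - r).toNat + 1), (r + (j.1 : ℤ)) * (n (cA hN j) i : ℤ)))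
          * q2 l ^ (∑ i, Bv B (fun i => ∑ j : Fin ((s - (u + 1)).toNat + 1), n (eA hN j) i) i
              * ∑ j : Fin ((u - r).toNat + 1), (r + (j.1 : ℤ)) * (n (cA hN j) i : ℤ)) := by
      have h5 : ∀ i ∈ (Finset.univ : Finset (Fin l)),
          (z2 l i * q2 l ^ Bv B (fun i => ∑ j : Fin ((s - (u + 1)).toNat + 1), n (eA hN j) i) i) ^
            (∑ j : Fin ((u - r).toNat + 1), (r + (j.1 : ℤ)) * (n (cA hN j) i : ℤ))
          = (z2 l i ^ (∑ j : Fin ((u - r).toNat + 1), (r + (j.1 : ℤ)) * (n (cA hN j) i : ℤ)))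
            * q2 l ^ (Bv B (fun i => ∑ j : Fin ((s - (u + 1)).toNat + 1), n (eA hN j) i) i
                * ∑ j : Fin ((u - r).toNat + 1), (r + (j.1 : ℤ)) * (n (cA hN j) i : ℤ)) :=
        fun i _ => by rw [mul_zpow, ← zpow_mul]
      rw [Finset.prod_congr rfl h5, Finset.prod_mul_distrib, ← zpow_sum' _ hq]
    rw [hE, hpoch, hzprod, hmid, Finset.prod_mul_distrib, zpow_add₀ hq, zpow_add₀ hq, mul_inv]
    ring

end
end

section
/- For every integer m ≥ 0 the closed form I_m := 1/((q)_m (z)_m) ∈ ℚ(q,z) satisfies the sl_2 fermionic recursion I_m = ∑_{a=0}^m z^a q^{a(a−1)} (q)_{m−a}^{−1} I_a; equivalently, 1/(z)_m = ∑_{a=0}^m [m,a]_q · z^a q^{a(a−1)} / (z)_a holds in the field ℚ(q,z). Consequently the sl_2 fermionic sum I_m(q,z) equals 1/((q)_m (z)_m). -/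
/- STATEMENT 4: sl_2 fermionic recursion for the closed form 1/((q)_m (z)_m),
   the equivalent q-binomial identity, and the consequence that the sl_2
   fermionic sum I_m(q,z) (the unique solution of the fermionic recursion
   with I_0 = 1) equals 1/((q)_m (z)_m).  Work in the field ℚ(q,z). -/

noncomputable section

open scoped BigOperators

/-- The field ℚ(q,z). -/
abbrev F4 : Type := FractionRing (MvPolynomial (Fin 2) ℚ)

/-- q -/
def q4 : F4 := algebraMap (MvPolynomial (Fin 2) ℚ) F4 (MvPolynomial.X 0)

/-- z -/
def z4 : F4 := algebraMap (MvPolynomial (Fin 2) ℚ) F4 (MvPolynomial.X 1)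

/-- `(x)_n = ∏_{i=1}^n (1 - q^{i-1} x)` -/
def poch4 (x : F4) (n : ℕ) : F4 := ∏ i ∈ Finset.range n, (1 - q4 ^ i * x)

/-- `(q)_n = ∏_{k=1}^n (1 - q^k)` -/
def qp4 (n : ℕ) : F4 := ∏ k ∈ Finset.range n, (1 - q4 ^ (k + 1))

/-- q-binomial coefficient `[m,a]_q = (q)_m / ((q)_a (q)_{m-a})` -/
def qbinom4 (m a : ℕ) : F4 := qp4 m / (qp4 a * qp4 (m - a))

lemma one_sub_ne (i k : ℕ) (h : 0 < i + k) : (1 : F4) - q4 ^ i * z4 ^ k ≠ 0 := by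
  have : (1 : F4) - q4 ^ i * z4 ^ k =
      algebraMap (MvPolynomial (Fin 2) ℚ) F4
        (1 - MvPolynomial.X 0 ^ i * MvPolynomial.X 1 ^ k) := by
    simp [q4, z4, map_sub, map_mul, map_pow]
  rw [this]
  intro hzero
  have hp : (1 - MvPolynomial.X 0 ^ i * MvPolynomial.X 1 ^ k :
      MvPolynomial (Fin 2) ℚ) = 0 := by
    exact (map_eq_zero_iff _ (IsFractionRing.injective _ _)).mp hzero
  have := congrArg (MvPolynomial.eval (fun _ => (0:ℚ))) hp
  rcases Nat.eq_zero_or_pos i with hi | hi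
  · subst hi
    have hk : k ≠ 0 := by omega
    simp [zero_pow hk] at this
  · simp [zero_pow hi.ne'] at this

lemma hq_ne (i : ℕ) : (1 : F4) - q4 ^ (i + 1) ≠ 0 := by
  have := one_sub_ne (i + 1) 0 (by omega)
  simpa using this

lemma hz_ne (i : ℕ) : (1 : F4) - q4 ^ i * z4 ≠ 0 := by
  have := one_sub_ne i 1 (by omega)
  simpa using this

lemma qp4_ne (n : ℕ) : qp4 n ≠ 0 :=
  Finset.prod_ne_zero_iff.mpr fun i _ => hq_ne i

lemma poch4_ne (j n : ℕ) : poch4 (q4 ^ j * z4) n ≠ 0 := by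
  refine Finset.prod_ne_zero_iff.mpr fun i _ => ?_
  have := hz_ne (i + j)
  rw [← mul_assoc, ← pow_add]
  exact this

lemma poch4_z_ne (n : ℕ) : poch4 z4 n ≠ 0 := by
  have := poch4_ne 0 n
  simpa using this

lemma qp4_succ (n : ℕ) : qp4 (n + 1) = qp4 n * (1 - q4 ^ (n + 1)) :=
  Finset.prod_range_succ _ n

lemma poch4_succ (x : F4) (n : ℕ) :
    poch4 x (n + 1) = poch4 x n * (1 - q4 ^ n * x) :=
  Finset.prod_range_succ _ n

lemma poch4_succ' (x : F4) (n : ℕ) :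
    poch4 x (n + 1) = (1 - x) * poch4 (q4 * x) n := by
  rw [poch4, Finset.prod_range_succ']
  simp [poch4, mul_comm, mul_assoc, pow_succ, mul_left_comm]

/-- Pascal-style recursive q-binomial. -/
def qb : ℕ → ℕ → F4
  | 0, 0 => 1
  | 0, _ + 1 => 0
  | _ + 1, 0 => 1
  | m + 1, a + 1 => q4 ^ (a + 1) * qb m (a + 1) + qb m a

lemma qb_zero_right (m : ℕ) : qb m 0 = 1 := by cases m <;> rfl

lemma qb_eq_zero : ∀ m a : ℕ, m < a → qb m a = 0 := by
  intro m
  induction m with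
  | zero => intro a ha; match a, ha with | a + 1, _ => rfl
  | succ n ih =>
    intro a ha
    match a, ha with
    | a + 1, ha =>
      show q4 ^ (a + 1) * qb n (a + 1) + qb n a = 0
      rw [ih (a + 1) (by omega), ih a (by omega)]
      ring

lemma qb_eq_qbinom : ∀ m a : ℕ, a ≤ m → qb m a = qbinom4 m a := by
  intro m
  induction m with
  | zero =>
    intro a ha
    interval_cases a
    simp [qb, qbinom4, qp4]
  | succ n ih =>
    intro a ha
    match a with
    | 0 =>
      rw [qb_zero_right, qbinom4]
      rw [Nat.sub_zero]
      rw [eq_div_iff (by exact mul_ne_zero (qp4_ne 0) (qp4_ne (n+1)))]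
      simp [qp4]
    | a + 1 =>
      show q4 ^ (a + 1) * qb n (a + 1) + qb n a = _
      rcases Nat.lt_or_ge n (a + 1) with h | h
      · -- a = n, top case
        have han : a = n := by omega
        subst han
        rw [qb_eq_zero a (a+1) (by omega), ih a le_rfl, qbinom4, qbinom4]
        rw [Nat.sub_self, Nat.sub_self]
        have h0 : qp4 0 = 1 := by simp [qp4]
        rw [h0]
        field_simp [qp4_ne]
        simp
      · obtain ⟨b, rfl⟩ : ∃ b, n = a + b + 1 := ⟨n - a - 1, by omega⟩
        rw [ih (a + 1) h, ih a (by omega), qbinom4, qbinom4, qbinom4]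
        have r1 : a + b + 1 + 1 - (a + 1) = b + 1 := by omega
        have r2 : a + b + 1 - (a + 1) = b := by omega
        have r3 : a + b + 1 - a = b + 1 := by omega
        rw [r1, r2, r3]
        have r4 : a + b + 1 + 1 = (a + b + 1) + 1 := rfl
        rw [r4, qp4_succ (a + b + 1), qp4_succ a, qp4_succ b]
        rw [show q4 ^ (a + b + 1 + 1) = q4 ^ (a + 1) * q4 ^ (b + 1) from by
          rw [← pow_add]; congr 1; omega]
        have hD1 : qp4 a * (1 - q4 ^ (a + 1)) * qp4 b ≠ 0 :=
          mul_ne_zero (mul_ne_zero (qp4_ne a) (hq_ne a)) (qp4_ne b)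
        have hD2 : qp4 a * (qp4 b * (1 - q4 ^ (b + 1))) ≠ 0 :=
          mul_ne_zero (qp4_ne a) (mul_ne_zero (qp4_ne b) (hq_ne b))
        have hD : qp4 a * (1 - q4 ^ (a + 1)) * (qp4 b * (1 - q4 ^ (b + 1))) ≠ 0 :=
          mul_ne_zero (mul_ne_zero (qp4_ne a) (hq_ne a))
            (mul_ne_zero (qp4_ne b) (hq_ne b))
        rw [mul_div_assoc', div_add_div _ _ hD1 hD2,
          div_eq_div_iff (mul_ne_zero hD1 hD2) hD]
        ring

lemma q_shift (j : ℕ) : q4 ^ (j + 1) * z4 = q4 * (q4 ^ j * z4) := by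
  rw [pow_succ]; ring

lemma poch_shift (j a : ℕ) :
    poch4 (q4 ^ (j + 1) * z4) a * (1 - q4 ^ j * z4) = poch4 (q4 ^ j * z4) (a + 1) := by
  rw [poch4_succ' (q4 ^ j * z4) a, q_shift]; ring

lemma pointwise (c : F4) (j a : ℕ) :
    q4 ^ a * (c * (q4 ^ j * z4) ^ a * q4 ^ (a * (a - 1)) / poch4 (q4 ^ j * z4) a)
      + c * (q4 ^ j * z4) ^ (a + 1) * q4 ^ ((a + 1) * a) / poch4 (q4 ^ j * z4) (a + 1)
    = c * (q4 ^ (j + 1) * z4) ^ a * q4 ^ (a * (a - 1)) / poch4 (q4 ^ (j + 1) * z4) a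
        * (1 / (1 - q4 ^ j * z4)) := by
  have h1 : poch4 (q4 ^ j * z4) a ≠ 0 := poch4_ne j a
  have h2 : (1 : F4) - q4 ^ a * (q4 ^ j * z4) ≠ 0 := by
    rw [← mul_assoc, ← pow_add]; exact hz_ne (a + j)
  have h3 : poch4 (q4 ^ (j + 1) * z4) a ≠ 0 := poch4_ne (j + 1) a
  have h4 : (1 : F4) - q4 ^ j * z4 ≠ 0 := hz_ne j
  have hrel := poch_shift j a
  rw [poch4_succ (q4 ^ j * z4) a] at hrel ⊢
  have e : q4 ^ ((a + 1) * a) = q4 ^ (a * (a - 1)) * q4 ^ a * q4 ^ a := by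
    rw [← pow_add, ← pow_add]
    congr 1
    rcases a with _ | b
    · simp
    · simp only [Nat.succ_sub_one]; ring
  rw [e, mul_one_div, div_div, hrel, q_shift, pow_succ (q4 ^ j * z4) a,
    mul_pow q4 (q4 ^ j * z4) a]
  have h2' : (1 : F4) - q4 ^ a * q4 ^ j * z4 ≠ 0 := by rw [mul_assoc]; exact h2
  field_simp
  ring

lemma sum_eq (m : ℕ) : ∀ j : ℕ,
    ∑ a ∈ Finset.range (m + 1),
      qb m a * (q4 ^ j * z4) ^ a * q4 ^ (a * (a - 1)) / poch4 (q4 ^ j * z4) a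
    = 1 / poch4 (q4 ^ j * z4) m := by
  induction m with
  | zero => intro j; simp [qb_zero_right, poch4]
  | succ m ih =>
    intro j
    have hsplit : ∀ a ∈ Finset.range (m + 1),
        qb (m + 1) (a + 1) * (q4 ^ j * z4) ^ (a + 1) * q4 ^ ((a + 1) * (a + 1 - 1))
            / poch4 (q4 ^ j * z4) (a + 1)
        = q4 ^ (a + 1) * (qb m (a + 1) * (q4 ^ j * z4) ^ (a + 1) * q4 ^ ((a + 1) * a)
            / poch4 (q4 ^ j * z4) (a + 1))
          + qb m a * (q4 ^ j * z4) ^ (a + 1) * q4 ^ ((a + 1) * a)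
            / poch4 (q4 ^ j * z4) (a + 1) := by
      intro a _
      have hq : qb (m + 1) (a + 1) = q4 ^ (a + 1) * qb m (a + 1) + qb m a := rfl
      rw [hq, Nat.add_sub_cancel]
      ring
    have h1 := Finset.sum_range_succ'
      (fun a => q4 ^ a * (qb m a * (q4 ^ j * z4) ^ a * q4 ^ (a * (a - 1))
        / poch4 (q4 ^ j * z4) a)) (m + 1)
    have h2 := Finset.sum_range_succ
      (fun a => q4 ^ a * (qb m a * (q4 ^ j * z4) ^ a * q4 ^ (a * (a - 1))
        / poch4 (q4 ^ j * z4) a)) (m + 1)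
    simp only [Nat.add_sub_cancel] at h1 h2
    rw [qb_eq_zero m (m + 1) (by omega)] at h2
    simp only [zero_mul, mul_zero, zero_div, mul_zero, add_zero] at h2
    calc ∑ a ∈ Finset.range (m + 1 + 1),
          qb (m + 1) a * (q4 ^ j * z4) ^ a * q4 ^ (a * (a - 1)) / poch4 (q4 ^ j * z4) a
        = (∑ a ∈ Finset.range (m + 1),
            q4 ^ (a + 1) * (qb m (a + 1) * (q4 ^ j * z4) ^ (a + 1) * q4 ^ ((a + 1) * a)
              / poch4 (q4 ^ j * z4) (a + 1)))
          + (∑ a ∈ Finset.range (m + 1),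
            qb m a * (q4 ^ j * z4) ^ (a + 1) * q4 ^ ((a + 1) * a)
              / poch4 (q4 ^ j * z4) (a + 1))
          + qb (m + 1) 0 * (q4 ^ j * z4) ^ 0 * q4 ^ (0 * (0 - 1)) / poch4 (q4 ^ j * z4) 0 := by
            rw [Finset.sum_range_succ']
            rw [Finset.sum_congr rfl hsplit, Finset.sum_add_distrib]
      _ = (∑ a ∈ Finset.range (m + 1),
            q4 ^ a * (qb m a * (q4 ^ j * z4) ^ a * q4 ^ (a * (a - 1))
              / poch4 (q4 ^ j * z4) a))
          + (∑ a ∈ Finset.range (m + 1),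
            qb m a * (q4 ^ j * z4) ^ (a + 1) * q4 ^ ((a + 1) * a)
              / poch4 (q4 ^ j * z4) (a + 1)) := by
            rw [← h2, h1, qb_zero_right, qb_zero_right]
            ring
      _ = ∑ a ∈ Finset.range (m + 1),
            (q4 ^ a * (qb m a * (q4 ^ j * z4) ^ a * q4 ^ (a * (a - 1))
              / poch4 (q4 ^ j * z4) a)
            + qb m a * (q4 ^ j * z4) ^ (a + 1) * q4 ^ ((a + 1) * a)
              / poch4 (q4 ^ j * z4) (a + 1)) := by
            rw [Finset.sum_add_distrib]
      _ = ∑ a ∈ Finset.range (m + 1),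
            qb m a * (q4 ^ (j + 1) * z4) ^ a * q4 ^ (a * (a - 1))
              / poch4 (q4 ^ (j + 1) * z4) a * (1 / (1 - q4 ^ j * z4)) := by
            exact Finset.sum_congr rfl fun a _ => pointwise (qb m a) j a
      _ = (∑ a ∈ Finset.range (m + 1),
            qb m a * (q4 ^ (j + 1) * z4) ^ a * q4 ^ (a * (a - 1))
              / poch4 (q4 ^ (j + 1) * z4) a) * (1 / (1 - q4 ^ j * z4)) := by
            rw [Finset.sum_mul]
      _ = 1 / poch4 (q4 ^ j * z4) (m + 1) := by
            rw [ih (j + 1), poch4_succ' (q4 ^ j * z4) m, ← q_shift,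
              div_mul_div_comm, one_mul]
            rw [mul_comm (poch4 (q4 ^ (j + 1) * z4) m)]

lemma part2 (m : ℕ) : 1 / poch4 z4 m =
    ∑ a ∈ Finset.range (m + 1),
      qbinom4 m a * z4 ^ a * q4 ^ (a * (a - 1)) / poch4 z4 a := by
  have h := sum_eq m 0
  simp only [pow_zero, one_mul] at h
  rw [← h]
  refine Finset.sum_congr rfl fun a ha => ?_
  rw [qb_eq_qbinom m a (by simpa [Nat.lt_succ_iff] using Finset.mem_range.mp ha)]

lemma part1 (m : ℕ) : 1 / (qp4 m * poch4 z4 m) =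
    ∑ a ∈ Finset.range (m + 1),
      z4 ^ a * q4 ^ (a * (a - 1)) / qp4 (m - a) * (1 / (qp4 a * poch4 z4 a)) := by
  have h := part2 m
  have hm := qp4_ne m
  have : (1 : F4) / (qp4 m * poch4 z4 m) = (1 / poch4 z4 m) * (1 / qp4 m) := by
    rw [div_mul_div_comm, one_mul, mul_comm]
  rw [this, h, Finset.sum_mul]
  refine Finset.sum_congr rfl fun a ha => ?_
  have ham : a ≤ m := by simpa [Nat.lt_succ_iff] using Finset.mem_range.mp ha
  rw [qbinom4]
  have h1 := qp4_ne a
  have h2 := qp4_ne (m - a)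
  have h3 := poch4_z_ne a
  field_simp

lemma part3 (I : ℕ → F4) (hI0 : I 0 = 1)
    (hrec : ∀ m : ℕ, I m = ∑ a ∈ Finset.range (m + 1),
      z4 ^ a * q4 ^ (a * (a - 1)) / qp4 (m - a) * I a) :
    ∀ m : ℕ, I m = 1 / (qp4 m * poch4 z4 m) := by
  intro m
  induction m using Nat.strong_induction_on with
  | _ m ihm =>
    match m with
    | 0 => rw [hI0]; simp [qp4, poch4]
    | m + 1 =>
      have hq0 : qp4 (m + 1 - (m + 1)) = 1 := by simp [qp4]
      have hrecm := hrec (m + 1)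
      have hpart1 := part1 (m + 1)
      rw [Finset.sum_range_succ, hq0, div_one] at hrecm hpart1
      have hsum : ∑ a ∈ Finset.range (m + 1),
          z4 ^ a * q4 ^ (a * (a - 1)) / qp4 (m + 1 - a) * I a
          = ∑ a ∈ Finset.range (m + 1),
          z4 ^ a * q4 ^ (a * (a - 1)) / qp4 (m + 1 - a)
            * (1 / (qp4 a * poch4 z4 a)) := by
        refine Finset.sum_congr rfl fun a ha => ?_
        rw [ihm a (Finset.mem_range.mp ha)]
      have hc : (1 : F4) - z4 ^ (m + 1) * q4 ^ ((m + 1) * (m + 1 - 1)) ≠ 0 := by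
        rw [mul_comm]
        exact one_sub_ne ((m + 1) * (m + 1 - 1)) (m + 1) (by omega)
      have e1 : (1 - z4 ^ (m + 1) * q4 ^ ((m + 1) * (m + 1 - 1))) * I (m + 1)
          = ∑ a ∈ Finset.range (m + 1),
            z4 ^ a * q4 ^ (a * (a - 1)) / qp4 (m + 1 - a) * I a := by
        linear_combination hrecm
      have e2 : (1 - z4 ^ (m + 1) * q4 ^ ((m + 1) * (m + 1 - 1)))
            * (1 / (qp4 (m + 1) * poch4 z4 (m + 1)))
          = ∑ a ∈ Finset.range (m + 1),
            z4 ^ a * q4 ^ (a * (a - 1)) / qp4 (m + 1 - a)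
              * (1 / (qp4 a * poch4 z4 a)) := by
        linear_combination hpart1
      exact mul_left_cancel₀ hc (by rw [e1, e2, ← hsum])

theorem stmt_4 :
    (∀ m : ℕ, 1 / (qp4 m * poch4 z4 m) =
      ∑ a ∈ Finset.range (m + 1),
        z4 ^ a * q4 ^ (a * (a - 1)) / qp4 (m - a) * (1 / (qp4 a * poch4 z4 a)))
    ∧ (∀ m : ℕ, 1 / poch4 z4 m =
      ∑ a ∈ Finset.range (m + 1),
        qbinom4 m a * z4 ^ a * q4 ^ (a * (a - 1)) / poch4 z4 a)
    ∧ (∀ I : ℕ → F4, I 0 = 1 →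
        (∀ m : ℕ, I m = ∑ a ∈ Finset.range (m + 1),
          z4 ^ a * q4 ^ (a * (a - 1)) / qp4 (m - a) * I a) →
        ∀ m : ℕ, I m = 1 / (qp4 m * poch4 z4 m)) :=
  ⟨part1, part2, part3⟩

end
end

section
/- For every integer m ≥ 0 the following identity holds in the field ℚ(q,z,w): 1/((q)_m (wz)_m) = ∑_{a=0}^m [ B_a(w) / ( (z^{−1} q^{2(1−a)})_a · (wz)_a ) ] · [ 1 / ( (q)_{m−a} · (q^{2a} z)_{m−a} ) ], where B_a(w) = ∏_{i=1}^a (1 − w q^{i−a}) / (q)_a. (With w = q^ν this is the recursion I_m(q, q^ν z) = ∑_{0≤a≤m} X^{(0,ν)}_a(q,z) I_{m−a}(q, q^{2a} z) for the sl_2 fermionic sums.) -/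
/- STATEMENT 7: identity in ℚ(q,z,w):
   1/((q)_m (wz)_m)
     = ∑_{a=0}^m [ B_a(w) / ((z⁻¹ q^{2(1−a)})_a (wz)_a) ]
                · [ 1 / ((q)_{m−a} (q^{2a} z)_{m−a}) ],
   where B_a(w) = ∏_{i=1}^a (1 − w q^{i−a}) / (q)_a. -/

noncomputable section

open scoped BigOperators

/-- The field ℚ(q,z,w). -/
abbrev F7 : Type := FractionRing (MvPolynomial (Fin 3) ℚ)

def q7 : F7 := algebraMap (MvPolynomial (Fin 3) ℚ) F7 (MvPolynomial.X 0)
def z7 : F7 := algebraMap (MvPolynomial (Fin 3) ℚ) F7 (MvPolynomial.X 1)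
def w7 : F7 := algebraMap (MvPolynomial (Fin 3) ℚ) F7 (MvPolynomial.X 2)

/-- `(x)_n = ∏_{i=1}^n (1 - q^{i-1} x)` -/
def poch7 (x : F7) (n : ℕ) : F7 := ∏ i ∈ Finset.range n, (1 - q7 ^ i * x)

/-- `(q)_n = ∏_{k=1}^n (1 - q^k)` -/
def qp7 (n : ℕ) : F7 := ∏ k ∈ Finset.range n, (1 - q7 ^ (k + 1))

/-- `B_a(w) = ∏_{i=1}^a (1 − w q^{i−a}) / (q)_a` -/
def B7 (a : ℕ) : F7 := (∏ i ∈ Finset.range a, (1 - w7 * q7 ^ ((i : ℤ) + 1 - a))) / qp7 a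

lemma nat_engine (i j k i' j' k' : ℕ)
    (h : q7^i*z7^j*w7^k = q7^i'*z7^j'*w7^k') : i = i' ∧ j = j' ∧ k = k' := by
  rw [q7, z7, w7] at h; simp only [← map_pow, ← map_mul] at h
  have h2 := IsFractionRing.injective (MvPolynomial (Fin 3) ℚ) F7 h
  simp only [MvPolynomial.X_pow_eq_monomial, MvPolynomial.monomial_mul, one_mul] at h2
  rw [MvPolynomial.monomial_eq_monomial_iff] at h2
  rcases h2 with h2 | h2
  · refine ⟨?_, ?_, ?_⟩
    · have := DFunLike.congr_fun h2.1 0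
      simpa [Finsupp.single_apply] using this
    · have := DFunLike.congr_fun h2.1 1
      simpa [Finsupp.single_apply] using this
    · have := DFunLike.congr_fun h2.1 2
      simpa [Finsupp.single_apply] using this
  · exact absurd h2.1 one_ne_zero

lemma hq0 : q7 ≠ 0 := by
  intro h
  have := IsFractionRing.injective (MvPolynomial (Fin 3) ℚ) F7 (h.trans (map_zero (algebraMap (MvPolynomial (Fin 3) ℚ) F7)).symm)
  exact MvPolynomial.X_ne_zero 0 this

lemma hz0 : z7 ≠ 0 := by
  intro h
  have := IsFractionRing.injective (MvPolynomial (Fin 3) ℚ) F7 (h.trans (map_zero (algebraMap (MvPolynomial (Fin 3) ℚ) F7)).symm)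
  exact MvPolynomial.X_ne_zero 1 this

lemma hw0 : w7 ≠ 0 := by
  intro h
  have := IsFractionRing.injective (MvPolynomial (Fin 3) ℚ) F7 (h.trans (map_zero (algebraMap (MvPolynomial (Fin 3) ℚ) F7)).symm)
  exact MvPolynomial.X_ne_zero 2 this

lemma zne (i j k : ℤ) (h : ¬(i = 0 ∧ j = 0 ∧ k = 0)) : q7^i * z7^j * w7^k ≠ 1 := by
  intro he
  have e1 : (i.toNat : ℤ) - ((-i).toNat : ℤ) = i := by omega
  have e2 : (j.toNat : ℤ) - ((-j).toNat : ℤ) = j := by omega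
  have e3 : (k.toNat : ℤ) - ((-k).toNat : ℤ) = k := by omega
  rw [← e1, ← e2, ← e3, zpow_sub₀ hq0, zpow_sub₀ hz0, zpow_sub₀ hw0] at he
  simp only [zpow_natCast] at he
  field_simp at he
  have key : q7^(i.toNat) * z7^(j.toNat) * w7^(k.toNat)
      = q7^((-i).toNat) * z7^((-j).toNat) * w7^((-k).toNat) := by
    rw [div_eq_one_iff_eq (by
      exact mul_ne_zero (mul_ne_zero (pow_ne_zero _ hq0) (pow_ne_zero _ hz0)) (pow_ne_zero _ hw0))] at he
    exact he
  obtain ⟨hi, hj, hk⟩ := nat_engine _ _ _ _ _ _ key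
  omega

lemma one_sub_zne (i j k : ℤ) (h : ¬(i = 0 ∧ j = 0 ∧ k = 0)) :
    (1:F7) - q7^i*z7^j*w7^k ≠ 0 :=
  sub_ne_zero.mpr (Ne.symm (zne i j k h))

lemma ne_q (i : ℕ) : (1:F7) - q7^(i+1) ≠ 0 := by
  have h := one_sub_zne ((i:ℤ)+1) 0 0 (by omega)
  have e : q7^((i:ℤ)+1)*z7^(0:ℤ)*w7^(0:ℤ) = q7^(i+1) := by
    rw [show ((i:ℤ)+1) = ((i+1 : ℕ) : ℤ) by push_cast; ring, zpow_natCast]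
    simp
  rwa [e] at h

lemma ne_wz (i : ℕ) : (1:F7) - q7^i*(w7*z7) ≠ 0 := by
  have h := one_sub_zne (i:ℤ) 1 1 (by omega)
  have e : q7^((i:ℤ))*z7^(1:ℤ)*w7^(1:ℤ) = q7^i*(w7*z7) := by
    rw [zpow_natCast, zpow_one, zpow_one]; ring
  rwa [e] at h

lemma ne_z2 (i j : ℕ) : (1:F7) - q7^i*(q7^j*z7) ≠ 0 := by
  have h := one_sub_zne ((i+j : ℕ) : ℤ) 1 0 (by omega)
  have e : q7^(((i+j:ℕ)):ℤ)*z7^(1:ℤ)*w7^(0:ℤ) = q7^i*(q7^j*z7) := by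
    rw [zpow_natCast, zpow_one, zpow_zero, pow_add]; ring
  rwa [e] at h

lemma zq_sub_ne (i j : ℕ) : q7^i*z7 - q7^j ≠ 0 := by
  intro h0
  have h1 : q7^i*z7 = q7^j := sub_eq_zero.mp h0
  apply zne ((i:ℤ)-j) 1 0 (by simp)
  rw [zpow_sub₀ hq0, zpow_natCast, zpow_natCast, zpow_one, zpow_zero, mul_one,
    div_mul_eq_mul_div, div_eq_one_iff_eq (pow_ne_zero _ hq0)]
  linear_combination h1

lemma pq_ne (i : ℕ) : (q7:F7)^i ≠ 0 := pow_ne_zero _ hq0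

lemma poch7_ne (x : F7) (h : ∀ i : ℕ, (1:F7) - q7^i*x ≠ 0) (n : ℕ) : poch7 x n ≠ 0 :=
  Finset.prod_ne_zero_iff.mpr fun i _ => h i

lemma qp7_ne (n : ℕ) : qp7 n ≠ 0 := Finset.prod_ne_zero_iff.mpr fun i _ => ne_q i

lemma pw_ne (n : ℕ) : poch7 (w7*z7) n ≠ 0 := poch7_ne _ ne_wz n

lemma pz_ne (j n : ℕ) : poch7 (q7^j*z7) n ≠ 0 := poch7_ne _ (fun i => ne_z2 i j) n

lemma pP_ne (a : ℕ) : poch7 (z7⁻¹ * q7^(2*(1-(a:ℤ)))) a ≠ 0 := by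
  apply poch7_ne
  intro i
  have h := one_sub_zne ((i:ℤ)+2-2*a) (-1) 0 (by omega)
  have e : q7^((i:ℤ)+2-2*a)*z7^(-1:ℤ)*w7^(0:ℤ) = q7^i*(z7⁻¹*q7^(2*(1-(a:ℤ)))) := by
    rw [show ((i:ℤ)+2-2*a) = (i:ℤ) + 2*(1-(a:ℤ)) by ring, zpow_add₀ hq0, zpow_natCast,
      zpow_neg, zpow_one, zpow_zero]
    ring
  rwa [e] at h

def PP (a : ℕ) : F7 := poch7 (z7⁻¹ * q7 ^ (2 * (1 - (a : ℤ)))) a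
def Bp (a : ℕ) : F7 := poch7 (w7 * q7 ^ (1 - (a : ℤ))) a

def Tm (m a : ℕ) : F7 :=
  (B7 a / (PP a * poch7 (w7 * z7) a)) * (1 / (qp7 (m - a) * poch7 (q7 ^ (2 * a) * z7) (m - a)))

lemma poch7_succ (x : F7) (n : ℕ) : poch7 x (n+1) = poch7 x n * (1 - q7^n * x) :=
  Finset.prod_range_succ _ _

lemma poch7_shift (x : F7) (n : ℕ) : poch7 x (n+1) = (1-x) * poch7 (q7*x) n := by
  unfold poch7
  rw [Finset.prod_range_succ']
  rw [mul_comm]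
  congr 1
  · simp
  · exact Finset.prod_congr rfl fun i _ => by rw [pow_succ]; ring_nf

lemma qp7_succ (n : ℕ) : qp7 (n+1) = qp7 n * (1 - q7^(n+1)) := Finset.prod_range_succ _ _

lemma B7_eq (a : ℕ) : B7 a = Bp a / qp7 a := by
  unfold B7 Bp poch7
  congr 1
  refine Finset.prod_congr rfl fun i _ => ?_
  congr 1
  rw [show ((i:ℤ)+1-(a:ℤ)) = (i:ℤ)+(1-(a:ℤ)) by ring, zpow_add₀ hq0, zpow_natCast]
  ring

lemma Bp_rec (a : ℕ) : Bp (a+1) * q7^a = (q7^a - w7) * Bp a := by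
  have hb2 : w7*q7^((1:ℤ)-((a:ℤ)+1)) = w7*(q7^a)⁻¹ := by
    rw [show (1:ℤ)-((a:ℤ)+1) = -(a:ℤ) by ring, zpow_neg, zpow_natCast]
  have hb : q7*(w7*q7^((1:ℤ)-((a:ℤ)+1))) = w7*q7^(1-(a:ℤ)) := by
    rw [show (1:ℤ)-(a:ℤ) = 1 + (1 - ((a:ℤ)+1)) by ring, zpow_add₀ hq0, zpow_one]
    ring
  have h1 : Bp (a+1) = (1 - w7*(q7^a)⁻¹) * Bp a := by
    unfold Bp
    push_cast
    rw [poch7_shift, hb, hb2]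
  have hA : (q7:F7)^a ≠ 0 := pq_ne a
  have e : (1 - w7*(q7^a)⁻¹)*q7^a = q7^a - w7 := by
    field_simp
  rw [h1]
  linear_combination Bp a * e

lemma P_rec (a : ℕ) :
    PP (a+1) * ((q7^(2*a)*z7 - q7^(a+1)) * (q7^(2*a)*z7))
      = PP a * ((q7^(2*a)*z7 - 1) * (q7^(2*a)*z7 - q7)) := by
  set y : F7 := z7⁻¹ * q7^(2*(1-((a:ℤ)+1))) with hy_def
  have hy : y = (q7^(2*a)*z7)⁻¹ := by
    rw [hy_def, show 2*(1-((a:ℤ)+1)) = -((2*a:ℕ):ℤ) by push_cast; ring, zpow_neg, zpow_natCast,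
      mul_inv]
    ring
  have h2 : q7*(q7*y) = z7⁻¹*q7^(2*(1-(a:ℤ))) := by
    rw [hy_def, show 2*(1-(a:ℤ)) = 2*(1-((a:ℤ)+1)) + 2 by ring, zpow_add₀ hq0]
    rw [show (2:ℤ) = ((2:ℕ):ℤ) by norm_num, zpow_natCast]
    ring
  have hPP : PP (a+1) = poch7 y (a+1) := by
    unfold PP
    rw [hy_def]
    push_cast
    ring_nf
  have s1 : poch7 y (a+1+1) = poch7 y (a+1) * (1 - q7^(a+1)*y) := poch7_succ y (a+1)
  have s2 : poch7 y (a+1+1) = (1-y)*((1-q7*y)*poch7 (q7*(q7*y)) a) := by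
    rw [poch7_shift y (a+1), poch7_shift (q7*y) a]
  have key : PP (a+1) * (1 - q7^(a+1)*y) = (1-y)*(1-q7*y)*PP a := by
    rw [hPP]
    unfold PP
    rw [← h2]
    linear_combination s2 - s1
  rw [hy] at key
  have hX : q7^(2*a)*z7 ≠ 0 := mul_ne_zero (pq_ne _) hz0
  field_simp [hq0, hz0] at key
  refine mul_right_cancel₀ hX ?_
  linear_combination (q7^(2*a)*z7) * key

lemma Dz_rec (a n : ℕ) :
    poch7 (q7^(2*a)*z7) (n+1) * (1 - q7^(n+1)*(q7^(2*a)*z7))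
      = (1 - q7^(2*a)*z7)*(1 - q7*(q7^(2*a)*z7))*poch7 (q7^(2*(a+1))*z7) n := by
  have h2 : q7*(q7*(q7^(2*a)*z7)) = q7^(2*(a+1))*z7 := by ring
  rw [← poch7_succ, poch7_shift (q7^(2*a)*z7) (n+1), poch7_shift (q7*(q7^(2*a)*z7)) n, h2]
  ring

def Rf (m k : ℕ) : F7 :=
  q7*q7^m*(1 - q7^m*(q7^k*z7))*(q7 - w7*z7*q7^k)*(1 - q7^k) /
    (q7^k*(q7^(2*k)*z7 - q7)*(1 - q7^(m+1))*(1 - q7^m*(w7*z7)))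


set_option maxHeartbeats 1000000 in
lemma hTm2_lem (a n : ℕ) : Tm (a+n+1) a
    = (1/((1 - q7^(n+1))*(1 - q7^n*(q7^(2*a)*z7)))) * Tm (a+n) a := by
  have e2 : a+n+1-a = n+1 := by omega
  have e3 : a+n-a = n := by omega
  simp only [Tm, e2, e3]
  rw [qp7_succ n, poch7_succ (q7^(2*a)*z7) n]
  field_simp [ne_q n, ne_z2 n (2*a)]

set_option maxHeartbeats 2000000 in
lemma hTm1_lem (a n : ℕ) : Tm (a+n+1) (a+1)
    = ((((q7^a - w7)/q7^a)
          * ((q7^(2*a)*z7 - q7^(a+1))*(q7^(2*a)*z7)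
              / ((q7^(2*a)*z7 - 1)*(q7^(2*a)*z7 - q7)))
          / ((1 - q7^(a+1))*(1 - q7^a*(w7*z7))))
        * ((1 - q7^(2*a)*z7)*(1 - q7*(q7^(2*a)*z7))
            / ((1 - q7^n*(q7^(2*a)*z7))*(1 - q7^(n+1)*(q7^(2*a)*z7)))))
      * Tm (a+n) a := by
  have e1 : a+n+1-(a+1) = n := by omega
  have e3 : a+n-a = n := by omega
  have hA := pq_ne a
  have hX : q7^(2*a)*z7 ≠ 0 := mul_ne_zero (pq_ne _) hz0
  have nz1 : (1:F7) - q7^(2*a)*z7 ≠ 0 := by simpa using ne_z2 0 (2*a)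
  have nz2 : (1:F7) - q7*(q7^(2*a)*z7) ≠ 0 := by simpa [pow_one] using ne_z2 1 (2*a)
  have nz3 : q7^(2*a)*z7 - q7 ≠ 0 := by simpa [pow_one] using zq_sub_ne (2*a) 1
  have nz4 : q7^(2*a)*z7 - (1:F7) ≠ 0 := by simpa using zq_sub_ne (2*a) 0
  have nz5 : q7^(2*a)*z7 - q7^(a+1) ≠ 0 := zq_sub_ne (2*a) (a+1)
  have rB : Bp (a+1) = (q7^a - w7) * Bp a / q7^a := by
    rw [eq_div_iff hA]; exact Bp_rec a
  have rP : PP (a+1) = PP a * ((q7^(2*a)*z7 - 1)*(q7^(2*a)*z7 - q7)) /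
      ((q7^(2*a)*z7 - q7^(a+1)) * (q7^(2*a)*z7)) := by
    rw [eq_div_iff (mul_ne_zero nz5 hX)]
    linear_combination P_rec a
  have rD : poch7 (q7^(2*(a+1))*z7) n
      = poch7 (q7^(2*a)*z7) n * (1 - q7^n*(q7^(2*a)*z7)) * (1 - q7^(n+1)*(q7^(2*a)*z7)) /
        ((1 - q7^(2*a)*z7)*(1 - q7*(q7^(2*a)*z7))) := by
    rw [eq_div_iff (mul_ne_zero nz1 nz2)]
    linear_combination (1 - q7^(n+1)*(q7^(2*a)*z7)) * poch7_succ (q7^(2*a)*z7) n - Dz_rec a n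
  have hPa : PP a ≠ 0 := pP_ne a
  have hBq : qp7 a ≠ 0 := qp7_ne a
  have hBqn : qp7 n ≠ 0 := qp7_ne n
  have hPwa : poch7 (w7*z7) a ≠ 0 := pw_ne a
  have hDza : poch7 (q7^(2*a)*z7) n ≠ 0 := pz_ne (2*a) n
  simp only [Tm, e1, e3, B7_eq]
  rw [rB, rP, rD, poch7_succ (w7*z7) a, qp7_succ a]
  field_simp [ne_q a, ne_q n, ne_wz a, ne_z2 n (2*a), ne_z2 (n+1) (2*a)]


set_option maxHeartbeats 2000000 in
lemma key_abs {K : Type} [Field K] (q z w A N : K)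
    (hq : q ≠ 0) (hA : A ≠ 0)
    (h1 : 1 - q*A ≠ 0) (h2 : 1 - A*(w*z) ≠ 0)
    (h3 : A^2*z - 1 ≠ 0) (h4 : A^2*z - q ≠ 0)
    (h6 : 1 - N*(A^2*z) ≠ 0) (h7 : 1 - q*N*(A^2*z) ≠ 0) (h8 : 1 - q*N ≠ 0)
    (h9 : 1 - q*(A*N) ≠ 0) (h10 : 1 - (A*N)*(w*z) ≠ 0)
    (h11 : (q*A)^2*z - q ≠ 0) :
    (q*(A*N)*(1 - (A*N)*((q*A)*z))*(q - w*z*(q*A))*(1 - q*A) /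
        ((q*A)*((q*A)^2*z - q)*(1 - q*(A*N))*(1 - (A*N)*(w*z))))
      * ((((A - w)/A)
            * ((A^2*z - q*A)*(A^2*z)/((A^2*z - 1)*(A^2*z - q)))
            / ((1 - q*A)*(1 - A*(w*z))))
          * ((1 - A^2*z)*(1 - q*(A^2*z))/((1 - N*(A^2*z))*(1 - q*N*(A^2*z)))))
      - (q*(A*N)*(1 - (A*N)*(A*z))*(q - w*z*A)*(1 - A)
          / (A*(A^2*z - q)*(1 - q*(A*N))*(1 - (A*N)*(w*z))))
        * (1/((1 - q*N)*(1 - N*(A^2*z))))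
    = 1/((1 - q*N)*(1 - N*(A^2*z))) - 1/((1 - q*(A*N))*(1 - (A*N)*(w*z))) := by
  have hD : (1 - q*(A*N))*(1 - (A*N)*(w*z))*(A^2*z - q)*(1 - N*(A^2*z))*(1 - q*N*(A^2*z))*(1 - q*N)
      ≠ 0 := by
    exact mul_ne_zero (mul_ne_zero (mul_ne_zero (mul_ne_zero (mul_ne_zero h9 h10) h4) h6) h7) h8
  have hDu1 : ((q*A)*((q*A)^2*z - q)*(1 - q*(A*N))*(1 - (A*N)*(w*z)))
      * (A*((A^2*z - 1)*(A^2*z - q))*((1 - q*A)*(1 - A*(w*z)))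
          *((1 - N*(A^2*z))*(1 - q*N*(A^2*z)))) ≠ 0 := by
    apply mul_ne_zero
    · exact mul_ne_zero (mul_ne_zero (mul_ne_zero (mul_ne_zero hq hA) h11) h9) h10
    · exact mul_ne_zero (mul_ne_zero (mul_ne_zero hA (mul_ne_zero h3 h4))
        (mul_ne_zero h1 h2)) (mul_ne_zero h6 h7)
  have hDu2 : (A*(A^2*z - q)*(1 - q*(A*N))*(1 - (A*N)*(w*z))) * ((1 - q*N)*(1 - N*(A^2*z)))
      ≠ 0 := by
    exact mul_ne_zero (mul_ne_zero (mul_ne_zero (mul_ne_zero hA h4) h9) h10)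
      (mul_ne_zero h8 h6)
  have red1 : (q*(A*N)*(1 - (A*N)*((q*A)*z))*(q - w*z*(q*A))*(1 - q*A) /
        ((q*A)*((q*A)^2*z - q)*(1 - q*(A*N))*(1 - (A*N)*(w*z))))
      * ((((A - w)/A)
            * ((A^2*z - q*A)*(A^2*z)/((A^2*z - 1)*(A^2*z - q)))
            / ((1 - q*A)*(1 - A*(w*z))))
          * ((1 - A^2*z)*(1 - q*(A^2*z))/((1 - N*(A^2*z))*(1 - q*N*(A^2*z)))))
      = (A^2*N*z*(1 - q*N*(A^2*z))*(A - w)*(A*z - q)*(1 - q*N))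
        / ((1 - q*(A*N))*(1 - (A*N)*(w*z))*(A^2*z - q)*(1 - N*(A^2*z))*(1 - q*N*(A^2*z))*(1 - q*N)) := by
    simp only [div_mul_div_comm, div_div]
    rw [div_eq_div_iff (by apply_rules [mul_ne_zero, hq, hA, h1, h2, h3, h4, h6, h7, h8, h9, h10, h11]) hD]
    ring
  have red2 : (q*(A*N)*(1 - (A*N)*(A*z))*(q - w*z*A)*(1 - A)
          / (A*(A^2*z - q)*(1 - q*(A*N))*(1 - (A*N)*(w*z))))
        * (1/((1 - q*N)*(1 - N*(A^2*z))))
      = (q*N*(q - A*(w*z))*(1 - A)*(1 - N*(A^2*z))*(1 - q*N*(A^2*z)))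
        / ((1 - q*(A*N))*(1 - (A*N)*(w*z))*(A^2*z - q)*(1 - N*(A^2*z))*(1 - q*N*(A^2*z))*(1 - q*N)) := by
    simp only [div_mul_div_comm, div_div, mul_one]
    rw [div_eq_div_iff (by apply_rules [mul_ne_zero, hq, hA, h1, h2, h3, h4, h6, h7, h8, h9, h10, h11]) hD]
    ring
  have redt : 1/((1 - q*N)*(1 - N*(A^2*z)))
      = ((1 - q*(A*N))*(1 - (A*N)*(w*z))*(A^2*z - q)*(1 - q*N*(A^2*z)))
        / ((1 - q*(A*N))*(1 - (A*N)*(w*z))*(A^2*z - q)*(1 - N*(A^2*z))*(1 - q*N*(A^2*z))*(1 - q*N)) := by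
    rw [div_eq_div_iff (mul_ne_zero h8 h6) hD]
    ring
  have redc : 1/((1 - q*(A*N))*(1 - (A*N)*(w*z)))
      = ((1 - q*N)*(1 - N*(A^2*z))*(A^2*z - q)*(1 - q*N*(A^2*z)))
        / ((1 - q*(A*N))*(1 - (A*N)*(w*z))*(A^2*z - q)*(1 - N*(A^2*z))*(1 - q*N*(A^2*z))*(1 - q*N)) := by
    rw [div_eq_div_iff (mul_ne_zero h9 h10) hD]
    ring
  rw [red1, red2, redt, redc, div_sub_div_same, div_sub_div_same]
  congr 1
  ring

set_option maxHeartbeats 4000000 in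
lemma cert (a n : ℕ) :
    Rf (a+n) (a+1) * Tm (a+n+1) (a+1) - Rf (a+n) a * Tm (a+n+1) a
      = Tm (a+n+1) a
        - (1/((1 - q7^(a+n+1))*(1 - q7^(a+n)*(w7*z7)))) * Tm (a+n) a := by
  have hsq : ((q7:F7)^a)^2 = q7^(2*a) := by rw [← pow_mul, Nat.mul_comm]
  have h1 : (1:F7) - q7*q7^a ≠ 0 := by
    rw [show (q7:F7)*q7^a = q7^(a+1) from by ring]; exact ne_q a
  have h3 : ((q7:F7)^a)^2*z7 - 1 ≠ 0 := by
    rw [hsq]; simpa using zq_sub_ne (2*a) 0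
  have h4 : ((q7:F7)^a)^2*z7 - q7 ≠ 0 := by
    rw [hsq]; simpa using zq_sub_ne (2*a) 1
  have h6 : (1:F7) - q7^n*((q7^a)^2*z7) ≠ 0 := by
    rw [hsq]; exact ne_z2 n (2*a)
  have h7 : (1:F7) - q7*q7^n*((q7^a)^2*z7) ≠ 0 := by
    rw [hsq, show (q7:F7)*q7^n = q7^(n+1) from by ring]; exact ne_z2 (n+1) (2*a)
  have h8 : (1:F7) - q7*q7^n ≠ 0 := by
    rw [show (q7:F7)*q7^n = q7^(n+1) from by ring]; exact ne_q n
  have h9 : (1:F7) - q7*(q7^a*q7^n) ≠ 0 := by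
    rw [show (q7:F7)*(q7^a*q7^n) = q7^(a+n+1) from by ring]; exact ne_q (a+n)
  have h10 : (1:F7) - (q7^a*q7^n)*(w7*z7) ≠ 0 := by
    rw [show (q7:F7)^a*q7^n = q7^(a+n) from by ring]; exact ne_wz (a+n)
  have h11 : ((q7:F7)*q7^a)^2*z7 - q7 ≠ 0 := by
    rw [show ((q7:F7)*q7^a)^2 = q7^(2*(a+1)) from by ring]
    simpa using zq_sub_ne (2*(a+1)) 1
  have key := key_abs q7 z7 w7 (q7^a) (q7^n) hq0 (pq_ne a) h1 (ne_wz a) h3 h4 h6 h7 h8 h9 h10 h11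
  rw [hTm1_lem a n, hTm2_lem a n]
  simp only [Rf]
  linear_combination Tm (a+n) a * key

lemma Rf_zero (m : ℕ) : Rf m 0 = 0 := by simp [Rf]

lemma Rf_top (m : ℕ) : Rf m (m+1) = -1 := by
  have hden : (q7:F7)^(m+1)*(q7^(2*(m+1))*z7 - q7)*(1 - q7^(m+1))*(1 - q7^m*(w7*z7)) ≠ 0 := by
    apply_rules [mul_ne_zero, pq_ne, ne_q, ne_wz, hq0]
    simpa using zq_sub_ne (2*(m+1)) 1
  rw [Rf, div_eq_iff hden]
  ring

lemma sum_step (m : ℕ) :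
    ∑ a ∈ Finset.range (m+1+1), Tm (m+1) a
      = (1/((1 - q7^(m+1))*(1 - q7^m*(w7*z7)))) * ∑ a ∈ Finset.range (m+1), Tm m a := by
  have tele := Finset.sum_range_sub (f := fun k => Rf m k * Tm (m+1) k) (m+1)
  have certs : ∀ a ∈ Finset.range (m+1),
      Rf m (a+1) * Tm (m+1) (a+1) - Rf m a * Tm (m+1) a
        = Tm (m+1) a - (1/((1 - q7^(m+1))*(1 - q7^m*(w7*z7)))) * Tm m a := by
    intro a ha
    obtain ⟨n, rfl⟩ := Nat.exists_eq_add_of_le (Nat.lt_succ_iff.mp (Finset.mem_range.mp ha))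
    exact cert a n
  have S1 : ∑ a ∈ Finset.range (m+1),
      (Tm (m+1) a - (1/((1 - q7^(m+1))*(1 - q7^m*(w7*z7)))) * Tm m a)
        = - Tm (m+1) (m+1) := by
    rw [← Finset.sum_congr rfl certs]
    rw [tele, Rf_zero, Rf_top]
    ring
  rw [Finset.sum_range_succ]
  rw [Finset.sum_sub_distrib, ← Finset.mul_sum] at S1
  linear_combination S1

theorem stmt_7' (m : ℕ) :
    1 / (qp7 m * poch7 (w7 * z7) m) = ∑ a ∈ Finset.range (m + 1), Tm m a := by
  induction m with
  | zero =>
    simp [Tm, B7, PP, qp7, poch7]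
  | succ m ih =>
    rw [sum_step m, ← ih, qp7_succ, poch7_succ]
    have h1 := ne_q m
    have h2 := ne_wz m
    have h3 := qp7_ne m
    have h4 := pw_ne m
    field_simp

theorem stmt_7 (m : ℕ) :
    1 / (qp7 m * poch7 (w7 * z7) m)
    = ∑ a ∈ Finset.range (m + 1),
        (B7 a / (poch7 (z7⁻¹ * q7 ^ (2 * (1 - (a : ℤ)))) a * poch7 (w7 * z7) a)) *
          (1 / (qp7 (m - a) * poch7 (q7 ^ (2 * a) * z7) (m - a))) := by
  exact stmt_7' m

end
end
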